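/- arXiv:2004.07494 — 4 statements merged into one kernel-verified Lean document; each statement's English description precedes it below -/
import Mathlib

section
/- Let A be strictly positive and let T1, T2, T3, T4 be bounded linear operators on H each admitting an A-adjoint (i.e. for each i there exists S_i with A∘S_i = T_i*∘A). Then w_B([[T1,T2],[T3,T4]]) ≥ max{w_A(T1), w_A(T4), w_A(T2 + T3)/2, w_A(T2 - T3)/2}. -/
open scoped InnerProductSpace
open ContinuousLinearMap

variable {H : Type*} [NormedAddCommGroup H] [InnerProductSpace ℂ H] [CompleteSpace H]

/-- The `A`-seminorm `‖x‖_A = √⟨Ax,x⟩`. -/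
noncomputable def aNorm (A : H →L[ℂ] H) (x : H) : ℝ :=
  Real.sqrt (⟪A x, x⟫_ℂ).re

/-- The `A`-numerical radius `w_A(T) = sup {|⟨ATx,x⟩| : x ∈ H, ‖x‖_A = 1}`. -/
noncomputable def wA (A T : H →L[ℂ] H) : ℝ :=
  sSup {r : ℝ | ∃ x : H, aNorm A x = 1 ∧ r = ‖⟪A (T x), x⟫_ℂ‖}

/-- The `A`-operator seminorm `‖T‖_A = sup {‖Tx‖_A : x ∈ closure (range A), ‖x‖_A = 1}`. -/
noncomputable def aOpNorm (A T : H →L[ℂ] H) : ℝ :=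
  sSup {r : ℝ | ∃ x : H, x ∈ closure (Set.range (⇑A)) ∧ aNorm A x = 1 ∧ r = aNorm A (T x)}

/-- The `B`-numerical radius of the operator matrix `[[T1,T2],[T3,T4]]` acting on `H ⊕ H` by
`(x, y) ↦ (T1 x + T2 y, T3 x + T4 y)`, where `B = [[A,0],[0,A]]`:
`w_B(T) = sup {|⟨BTz,z⟩| : z ∈ H ⊕ H, ‖z‖_B = 1}`. -/
noncomputable def wB (A T1 T2 T3 T4 : H →L[ℂ] H) : ℝ :=
  sSup {r : ℝ | ∃ x y : H, Real.sqrt ((⟪A x, x⟫_ℂ).re + (⟪A y, y⟫_ℂ).re) = 1 ∧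
    r = ‖⟪A (T1 x + T2 y), x⟫_ℂ + ⟪A (T3 x + T4 y), y⟫_ℂ‖}

section Aux

variable {A : H →L[ℂ] H}

lemma aNorm_nonneg (A : H →L[ℂ] H) (x : H) : 0 ≤ aNorm A x := Real.sqrt_nonneg _

lemma aNorm_sq (hA : A.IsPositive) (x : H) : aNorm A x ^ 2 = (⟪A x, x⟫_ℂ).re :=
  Real.sq_sqrt (hA.re_inner_nonneg_left x)

/-- The semi-inner-product core given by a positive operator. -/
noncomputable def aCore (hA : A.IsPositive) : PreInnerProductSpace.Core ℂ H where
  inner x y := ⟪A x, y⟫_ℂ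
  conj_inner_symm x y := by
    have hsymm := isSelfAdjoint_iff_isSymmetric.mp hA.isSelfAdjoint
    calc (starRingEnd ℂ) ⟪A y, x⟫_ℂ = ⟪x, A y⟫_ℂ := inner_conj_symm _ _
    _ = ⟪A x, y⟫_ℂ := (hsymm x y).symm
  re_inner_nonneg x := hA.re_inner_nonneg_left x
  add_left x y z := by simp [inner_add_left]
  smul_left x y r := by simp [inner_smul_left]; ring

lemma aCS (hA : A.IsPositive) (x y : H) : ‖⟪A x, y⟫_ℂ‖ ≤ aNorm A x * aNorm A y := by
  have h := @InnerProductSpace.Core.inner_mul_inner_self_le ℂ H _ _ _ (aCore hA) x y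
  have hsm := isSelfAdjoint_iff_isSymmetric.mp hA.isSelfAdjoint
  simp only [LinearMap.IsSymmetric, ContinuousLinearMap.coe_coe] at hsm
  have hsymm : ‖⟪A y, x⟫_ℂ‖ = ‖⟪A x, y⟫_ℂ‖ := by
    have e : ⟪A y, x⟫_ℂ = starRingEnd ℂ ⟪A x, y⟫_ℂ := by
      rw [← inner_conj_symm (A y) x, hsm x y]
    rw [e, RCLike.norm_conj]
  change ‖⟪A x, y⟫_ℂ‖ * ‖⟪A y, x⟫_ℂ‖ ≤ Complex.re ⟪A x, x⟫_ℂ * Complex.re ⟪A y, y⟫_ℂ at h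
  rw [hsymm, ← aNorm_sq hA, ← aNorm_sq hA] at h
  have h2 : ‖⟪A x, y⟫_ℂ‖ ^ 2 ≤ (aNorm A x * aNorm A y) ^ 2 := by
    rw [mul_pow]; nlinarith [h, norm_nonneg ⟪A x, y⟫_ℂ]
  calc ‖⟪A x, y⟫_ℂ‖ = Real.sqrt (‖⟪A x, y⟫_ℂ‖ ^ 2) := (Real.sqrt_sq (norm_nonneg _)).symm
  _ ≤ Real.sqrt ((aNorm A x * aNorm A y) ^ 2) := Real.sqrt_le_sqrt h2
  _ = aNorm A x * aNorm A y := Real.sqrt_sq (mul_nonneg (aNorm_nonneg _ _) (aNorm_nonneg _ _))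


lemma aNorm_le_norm (hA : A.IsPositive) (x : H) :
    aNorm A x ≤ Real.sqrt ‖A‖ * ‖x‖ := by
  have h1 : (⟪A x, x⟫_ℂ).re ≤ ‖A‖ * ‖x‖ ^ 2 := by
    calc (⟪A x, x⟫_ℂ).re ≤ ‖⟪A x, x⟫_ℂ‖ := Complex.re_le_norm _
    _ ≤ ‖A x‖ * ‖x‖ := norm_inner_le_norm _ _
    _ ≤ ‖A‖ * ‖x‖ * ‖x‖ := by
        gcongr; exact A.le_opNorm x
    _ = ‖A‖ * ‖x‖ ^ 2 := by ring
  calc aNorm A x ≤ Real.sqrt (‖A‖ * ‖x‖ ^ 2) := Real.sqrt_le_sqrt h1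
  _ = Real.sqrt ‖A‖ * ‖x‖ := by
      rw [Real.sqrt_mul (norm_nonneg A), Real.sqrt_sq (norm_nonneg x)]

lemma pow_apply_norm_le (K : H →L[ℂ] H) (m : ℕ) (u : H) :
    ‖(K ^ m) u‖ ≤ ‖K‖ ^ m * ‖u‖ := by
  induction m with
  | zero => simp
  | succ n ih =>
    rw [pow_succ', pow_succ']
    calc ‖(K * K ^ n) u‖ = ‖K ((K ^ n) u)‖ := by rw [ContinuousLinearMap.mul_apply]
    _ ≤ ‖K‖ * ‖(K ^ n) u‖ := K.le_opNorm _
    _ ≤ ‖K‖ * (‖K‖ ^ n * ‖u‖) := by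
        gcongr
    _ = ‖K‖ * ‖K‖ ^ n * ‖u‖ := by ring

/-- powers of an A-selfadjoint operator are A-selfadjoint -/
lemma pow_aSelfAdjoint {K : H →L[ℂ] H} (hK : A * K = star K * A)
    (m : ℕ) : A * (K ^ m) = star (K ^ m) * A := by
  rw [star_pow]
  induction m with
  | zero => simp
  | succ n ih =>
    rw [pow_succ, pow_succ, ← mul_assoc, ih, mul_assoc, hK, ← mul_assoc]

lemma aStep (hA : A.IsPositive) {K : H →L[ℂ] H} (hK : A * K = star K * A)
    (m : ℕ) (u : H) :
    aNorm A ((K ^ m) u) ^ 2 ≤ aNorm A u * aNorm A ((K ^ (2 * m)) u) := by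
  have happ : A ((K ^ m) u) = (star (K ^ m)) (A u) := by
    have := congrArg (fun f : H →L[ℂ] H => f u) (pow_aSelfAdjoint hK m)
    simpa [ContinuousLinearMap.mul_apply] using this
  have hinner : ⟪A ((K ^ m) u), (K ^ m) u⟫_ℂ = ⟪A u, (K ^ (2 * m)) u⟫_ℂ := by
    rw [happ, ContinuousLinearMap.star_eq_adjoint, ContinuousLinearMap.adjoint_inner_left]
    congr 1
    rw [two_mul, pow_add, ContinuousLinearMap.mul_apply]
  calc aNorm A ((K ^ m) u) ^ 2 = (⟪A ((K ^ m) u), (K ^ m) u⟫_ℂ).re := aNorm_sq hA _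
  _ = (⟪A u, (K ^ (2 * m)) u⟫_ℂ).re := by rw [hinner]
  _ ≤ ‖⟪A u, (K ^ (2 * m)) u⟫_ℂ‖ := Complex.re_le_norm _
  _ ≤ aNorm A u * aNorm A ((K ^ (2 * m)) u) := aCS hA _ _

lemma aIter (hA : A.IsPositive) {K : H →L[ℂ] H} (hK : A * K = star K * A)
    (n : ℕ) (u : H) :
    aNorm A (K u) ^ (2 ^ n) ≤ aNorm A u ^ (2 ^ n - 1) * aNorm A ((K ^ (2 ^ n)) u) := by
  induction n with
  | zero => simpa using le_refl _
  | succ n ih =>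
    have h1 : (1 : ℕ) ≤ 2 ^ n := Nat.one_le_two_pow
    have e1 : 2 ^ (n + 1) = 2 ^ n * 2 := by rw [pow_succ]
    have e2 : 2 * 2 ^ n = 2 ^ (n + 1) := by rw [pow_succ]; ring
    calc aNorm A (K u) ^ 2 ^ (n + 1) = (aNorm A (K u) ^ 2 ^ n) ^ 2 := by
          rw [e1, pow_mul]
    _ ≤ (aNorm A u ^ (2 ^ n - 1) * aNorm A ((K ^ (2 ^ n)) u)) ^ 2 := by
          exact pow_le_pow_left₀ (pow_nonneg (aNorm_nonneg _ _) _) ih 2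
    _ = aNorm A u ^ (2 * (2 ^ n - 1)) * aNorm A ((K ^ (2 ^ n)) u) ^ 2 := by
          rw [mul_pow, ← pow_mul, mul_comm (2 ^ n - 1) 2]
    _ ≤ aNorm A u ^ (2 * (2 ^ n - 1)) * (aNorm A u * aNorm A ((K ^ (2 ^ (n + 1))) u)) := by
          have := aStep hA hK (2 ^ n) u
          rw [e2] at this
          exact mul_le_mul_of_nonneg_left this (pow_nonneg (aNorm_nonneg _ _) _)
    _ = aNorm A u ^ (2 ^ (n + 1) - 1) * aNorm A ((K ^ (2 ^ (n + 1))) u) := by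
          rw [← mul_assoc, ← pow_succ]
          congr 2
          omega

lemma aNorm_zero : aNorm A (0 : H) = 0 := by simp [aNorm]

lemma aSelfBound (hA : A.IsPositive) {K : H →L[ℂ] H} (hK : A * K = star K * A)
    (u : H) : aNorm A (K u) ≤ ‖K‖ * aNorm A u := by
  by_cases hu : aNorm A u = 0
  · have h := aIter hA hK 1 u
    rw [hu] at h
    have h' : aNorm A (K u) ^ 2 ≤ 0 := by norm_num at h ⊢; simpa using h
    have hz : aNorm A (K u) = 0 := by nlinarith [aNorm_nonneg A (K u)]
    rw [hz, hu, mul_zero]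
  · have ht : 0 < aNorm A u := lt_of_le_of_ne (aNorm_nonneg A u) (Ne.symm hu)
    by_contra hcon
    push_neg at hcon
    have hM : 0 < ‖K‖ := by
      rcases lt_or_eq_of_le (norm_nonneg K) with h | h
      · exact h
      · exfalso
        have hK0 : K = 0 := by
          rw [← norm_eq_zero]; exact h.symm
        rw [hK0] at hcon
        simp only [ContinuousLinearMap.zero_apply, aNorm_zero] at hcon
        nlinarith [norm_nonneg (0 : H →L[ℂ] H)]
    set t := aNorm A u with htdef
    set M := ‖K‖ with hMdef
    set q := aNorm A (K u) / (M * t) with hqdef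
    have hq1 : 1 < q := (one_lt_div (by positivity)).mpr hcon
    have key : ∀ n : ℕ, q ^ (2 ^ n) ≤ Real.sqrt ‖A‖ * ‖u‖ / t := by
      intro n
      have hb : aNorm A (K u) ^ (2 ^ n) ≤
          Real.sqrt ‖A‖ * ‖u‖ * M ^ (2 ^ n) * t ^ (2 ^ n - 1) := by
        calc aNorm A (K u) ^ (2 ^ n)
            ≤ t ^ (2 ^ n - 1) * aNorm A ((K ^ (2 ^ n)) u) := aIter hA hK n u
        _ ≤ t ^ (2 ^ n - 1) * (Real.sqrt ‖A‖ * ‖(K ^ (2 ^ n)) u‖) := by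
            exact mul_le_mul_of_nonneg_left (aNorm_le_norm hA _)
              (pow_nonneg (aNorm_nonneg _ _) _)
        _ ≤ t ^ (2 ^ n - 1) * (Real.sqrt ‖A‖ * (M ^ (2 ^ n) * ‖u‖)) := by
            exact mul_le_mul_of_nonneg_left
              (mul_le_mul_of_nonneg_left (pow_apply_norm_le K (2 ^ n) u)
                (Real.sqrt_nonneg _))
              (pow_nonneg (aNorm_nonneg _ _) _)
        _ = Real.sqrt ‖A‖ * ‖u‖ * M ^ (2 ^ n) * t ^ (2 ^ n - 1) := by ring
      rw [hqdef, div_pow, div_le_div_iff₀ (by positivity) ht]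
      have e1 : (M * t) ^ (2 ^ n) = M ^ (2 ^ n) * (t ^ (2 ^ n - 1) * t) := by
        rw [mul_pow]
        congr 1
        rw [← pow_succ, Nat.sub_add_cancel Nat.one_le_two_pow]
      rw [e1]
      calc aNorm A (K u) ^ 2 ^ n * t
          ≤ (Real.sqrt ‖A‖ * ‖u‖ * M ^ (2 ^ n) * t ^ (2 ^ n - 1)) * t :=
            mul_le_mul_of_nonneg_right hb ht.le
      _ = Real.sqrt ‖A‖ * ‖u‖ * (M ^ 2 ^ n * (t ^ (2 ^ n - 1) * t)) := by ring
    obtain ⟨n, hn⟩ := pow_unbounded_of_one_lt (Real.sqrt ‖A‖ * ‖u‖ / t) hq1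
    have h2n : q ^ n ≤ q ^ (2 ^ n) := pow_le_pow_right₀ hq1.le (Nat.lt_two_pow_self (n := n)).le
    linarith [key n]

lemma aAdjBound (hA : A.IsPositive) {S T : H →L[ℂ] H}
    (hS : A ∘L S = (ContinuousLinearMap.adjoint T) ∘L A) (u : H) :
    aNorm A (T u) ≤ Real.sqrt ‖S * T‖ * aNorm A u := by
  have hmul : A * S = star T * A := by
    rw [ContinuousLinearMap.mul_def, ContinuousLinearMap.mul_def,
      ContinuousLinearMap.star_eq_adjoint]
    exact hS
  have hAT : A * T = star S * A := by
    have h := congrArg star hmul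
    rw [star_mul, star_mul, star_star, hA.isSelfAdjoint.star_eq] at h
    exact h.symm
  have hK : A * (S * T) = star (S * T) * A := by
    rw [star_mul, ← mul_assoc, hmul, mul_assoc, hAT, ← mul_assoc]
  have happ : A (T u) = (star S) (A u) := by
    have := congrArg (fun f : H →L[ℂ] H => f u) hAT
    simpa [ContinuousLinearMap.mul_apply] using this
  have hsq : aNorm A (T u) ^ 2 ≤ ‖S * T‖ * aNorm A u ^ 2 := by
    calc aNorm A (T u) ^ 2 = (⟪A (T u), T u⟫_ℂ).re := aNorm_sq hA _
    _ = (⟪A u, (S * T) u⟫_ℂ).re := by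
        rw [happ, ContinuousLinearMap.star_eq_adjoint,
          ContinuousLinearMap.adjoint_inner_left, ContinuousLinearMap.mul_apply]
    _ ≤ ‖⟪A u, (S * T) u⟫_ℂ‖ := Complex.re_le_norm _
    _ ≤ aNorm A u * aNorm A ((S * T) u) := aCS hA _ _
    _ ≤ aNorm A u * (‖S * T‖ * aNorm A u) := by
        exact mul_le_mul_of_nonneg_left (aSelfBound hA hK u) (aNorm_nonneg _ _)
    _ = ‖S * T‖ * aNorm A u ^ 2 := by ring
  calc aNorm A (T u) = Real.sqrt (aNorm A (T u) ^ 2) :=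
        (Real.sqrt_sq (aNorm_nonneg _ _)).symm
  _ ≤ Real.sqrt (‖S * T‖ * aNorm A u ^ 2) := Real.sqrt_le_sqrt hsq
  _ = Real.sqrt ‖S * T‖ * aNorm A u := by
      rw [Real.sqrt_mul (norm_nonneg _), Real.sqrt_sq (aNorm_nonneg _ _)]

lemma smul_inner_eq (A T : H →L[ℂ] H) (c d : ℂ) (x : H) :
    ⟪A (T (c • x)), d • x⟫_ℂ = starRingEnd ℂ c * d * ⟪A (T x), x⟫_ℂ := by
  rw [map_smul, map_smul, inner_smul_left, inner_smul_right]; ring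

lemma inner_smul_self_eq (A : H →L[ℂ] H) (c : ℂ) (x : H) :
    ⟪A (c • x), c • x⟫_ℂ = starRingEnd ℂ c * c * ⟪A x, x⟫_ℂ := by
  rw [map_smul, inner_smul_left, inner_smul_right]; ring

lemma Vval (A T1 T2 T3 T4 : H →L[ℂ] H) (x : H) (s : ℝ) (ε : ℂ)
    (hε : starRingEnd ℂ ε * ε = 1) :
    ⟪A (T1 ((s : ℂ) • x) + T2 (((s : ℂ) * ε) • x)), (s : ℂ) • x⟫_ℂ
      + ⟪A (T3 ((s : ℂ) • x) + T4 (((s : ℂ) * ε) • x)), ((s : ℂ) * ε) • x⟫_ℂ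
    = (s : ℂ) ^ 2 * ((⟪A (T1 x), x⟫_ℂ + ⟪A (T4 x), x⟫_ℂ)
        + (starRingEnd ℂ ε * ⟪A (T2 x), x⟫_ℂ + ε * ⟪A (T3 x), x⟫_ℂ)) := by
  simp only [map_add, inner_add_left, smul_inner_eq, Complex.conj_ofReal, map_mul]
  linear_combination (s : ℂ) ^ 2 * ⟪A (T4 x), x⟫_ℂ * hε

lemma sq_inv_sqrt_two : ((Real.sqrt 2)⁻¹ : ℝ) ^ 2 = 2⁻¹ := by
  rw [inv_pow, Real.sq_sqrt (by norm_num : (0:ℝ) ≤ 2)]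

lemma Vconstraint (A : H →L[ℂ] H) (x : H) (hx : (⟪A x, x⟫_ℂ).re = 1) (ε : ℂ)
    (hε : starRingEnd ℂ ε * ε = 1) :
    Real.sqrt ((⟪A ((((Real.sqrt 2)⁻¹ : ℝ) : ℂ) • x), (((Real.sqrt 2)⁻¹ : ℝ) : ℂ) • x⟫_ℂ).re
      + (⟪A (((((Real.sqrt 2)⁻¹ : ℝ) : ℂ) * ε) • x),
          ((((Real.sqrt 2)⁻¹ : ℝ) : ℂ) * ε) • x⟫_ℂ).re) = 1 := by
  set s : ℝ := (Real.sqrt 2)⁻¹ with hs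
  have h2 : (starRingEnd ℂ) ((s : ℂ) * ε) * ((s : ℂ) * ε) = (s : ℂ) * (s : ℂ) := by
    rw [map_mul, Complex.conj_ofReal]
    linear_combination (s : ℂ) * (s : ℂ) * hε
  rw [inner_smul_self_eq, inner_smul_self_eq, Complex.conj_ofReal, h2,
    ← Complex.ofReal_mul, Complex.re_ofReal_mul, hx, mul_one]
  have hss : s * s = 2⁻¹ := by rw [← sq]; exact sq_inv_sqrt_two
  rw [hss]
  norm_num

end Aux

theorem stmt7 (A T1 T2 T3 T4 : H →L[ℂ] H) (hA : A.IsPositive) (hA' : ∀ x : H, x ≠ 0 → 0 < (⟪A x, x⟫_ℂ).re)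
    (h1 : ∃ S : H →L[ℂ] H, A ∘L S = (ContinuousLinearMap.adjoint T1) ∘L A)
    (h2 : ∃ S : H →L[ℂ] H, A ∘L S = (ContinuousLinearMap.adjoint T2) ∘L A)
    (h3 : ∃ S : H →L[ℂ] H, A ∘L S = (ContinuousLinearMap.adjoint T3) ∘L A)
    (h4 : ∃ S : H →L[ℂ] H, A ∘L S = (ContinuousLinearMap.adjoint T4) ∘L A) :
    max (max (wA A T1) (wA A T4)) (max (wA A (T2 + T3) / 2) (wA A (T2 - T3) / 2)) ≤
      wB A T1 T2 T3 T4 := by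
  obtain ⟨S1, hS1⟩ := h1
  obtain ⟨S2, hS2⟩ := h2
  obtain ⟨S3, hS3⟩ := h3
  obtain ⟨S4, hS4⟩ := h4
  have hb1 := aAdjBound hA hS1
  have hb2 := aAdjBound hA hS2
  have hb3 := aAdjBound hA hS3
  have hb4 := aAdjBound hA hS4
  set c1 := Real.sqrt ‖S1 * T1‖ with hc1
  set c2 := Real.sqrt ‖S2 * T2‖ with hc2
  set c3 := Real.sqrt ‖S3 * T3‖ with hc3
  set c4 := Real.sqrt ‖S4 * T4‖ with hc4
  have hc1n : 0 ≤ c1 := Real.sqrt_nonneg _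
  have hc2n : 0 ≤ c2 := Real.sqrt_nonneg _
  have hc3n : 0 ≤ c3 := Real.sqrt_nonneg _
  have hc4n : 0 ≤ c4 := Real.sqrt_nonneg _
  have hbdd : BddAbove {r : ℝ | ∃ x y : H,
      Real.sqrt ((⟪A x, x⟫_ℂ).re + (⟪A y, y⟫_ℂ).re) = 1 ∧
      r = ‖⟪A (T1 x + T2 y), x⟫_ℂ + ⟪A (T3 x + T4 y), y⟫_ℂ‖} := by
    refine ⟨c1 + c2 + c3 + c4, ?_⟩
    rintro r ⟨x, y, hxy, rfl⟩
    have hpx : 0 ≤ (⟪A x, x⟫_ℂ).re := hA.re_inner_nonneg_left x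
    have hpy : 0 ≤ (⟪A y, y⟫_ℂ).re := hA.re_inner_nonneg_left y
    have hsum : (⟪A x, x⟫_ℂ).re + (⟪A y, y⟫_ℂ).re = 1 := Real.sqrt_eq_one.mp hxy
    have hax : aNorm A x ≤ 1 := Real.sqrt_le_one.mpr (by linarith)
    have hay : aNorm A y ≤ 1 := Real.sqrt_le_one.mpr (by linarith)
    have haxn : 0 ≤ aNorm A x := aNorm_nonneg _ _
    have hayn : 0 ≤ aNorm A y := aNorm_nonneg _ _
    have e1 : ‖⟪A (T1 x), x⟫_ℂ‖ ≤ c1 := by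
      calc ‖⟪A (T1 x), x⟫_ℂ‖ ≤ aNorm A (T1 x) * aNorm A x := aCS hA _ _
      _ ≤ (c1 * aNorm A x) * aNorm A x :=
          mul_le_mul_of_nonneg_right (hb1 x) haxn
      _ ≤ (c1 * 1) * 1 := by gcongr
      _ = c1 := by ring
    have e2 : ‖⟪A (T2 y), x⟫_ℂ‖ ≤ c2 := by
      calc ‖⟪A (T2 y), x⟫_ℂ‖ ≤ aNorm A (T2 y) * aNorm A x := aCS hA _ _
      _ ≤ (c2 * aNorm A y) * aNorm A x :=
          mul_le_mul_of_nonneg_right (hb2 y) haxn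
      _ ≤ (c2 * 1) * 1 := by gcongr
      _ = c2 := by ring
    have e3 : ‖⟪A (T3 x), y⟫_ℂ‖ ≤ c3 := by
      calc ‖⟪A (T3 x), y⟫_ℂ‖ ≤ aNorm A (T3 x) * aNorm A y := aCS hA _ _
      _ ≤ (c3 * aNorm A x) * aNorm A y :=
          mul_le_mul_of_nonneg_right (hb3 x) hayn
      _ ≤ (c3 * 1) * 1 := by gcongr
      _ = c3 := by ring
    have e4 : ‖⟪A (T4 y), y⟫_ℂ‖ ≤ c4 := by
      calc ‖⟪A (T4 y), y⟫_ℂ‖ ≤ aNorm A (T4 y) * aNorm A y := aCS hA _ _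
      _ ≤ (c4 * aNorm A y) * aNorm A y :=
          mul_le_mul_of_nonneg_right (hb4 y) hayn
      _ ≤ (c4 * 1) * 1 := by gcongr
      _ = c4 := by ring
    calc ‖⟪A (T1 x + T2 y), x⟫_ℂ + ⟪A (T3 x + T4 y), y⟫_ℂ‖
        ≤ ‖⟪A (T1 x + T2 y), x⟫_ℂ‖ + ‖⟪A (T3 x + T4 y), y⟫_ℂ‖ := norm_add_le _ _
    _ ≤ (‖⟪A (T1 x), x⟫_ℂ‖ + ‖⟪A (T2 y), x⟫_ℂ‖)
        + (‖⟪A (T3 x), y⟫_ℂ‖ + ‖⟪A (T4 y), y⟫_ℂ‖) := by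
          simp only [map_add, inner_add_left]
          exact add_le_add (norm_add_le _ _) (norm_add_le _ _)
    _ ≤ c1 + c2 + c3 + c4 := by linarith
  have hwB0 : 0 ≤ wB A T1 T2 T3 T4 := by
    apply Real.sSup_nonneg
    rintro r ⟨x, y, hxy, rfl⟩
    exact norm_nonneg _
  have hmem : ∀ u v : H, Real.sqrt ((⟪A u, u⟫_ℂ).re + (⟪A v, v⟫_ℂ).re) = 1 →
      ‖⟪A (T1 u + T2 v), u⟫_ℂ + ⟪A (T3 u + T4 v), v⟫_ℂ‖ ≤ wB A T1 T2 T3 T4 :=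
    fun u v h => le_csSup hbdd ⟨u, v, h, rfl⟩
  have hT1 : wA A T1 ≤ wB A T1 T2 T3 T4 := by
    apply Real.sSup_le _ hwB0
    rintro r ⟨x, hx, rfl⟩
    have hx1 : (⟪A x, x⟫_ℂ).re = 1 := by
      rw [aNorm] at hx
      exact Real.sqrt_eq_one.mp hx
    have hval : ⟪A (T1 x + T2 0), x⟫_ℂ + ⟪A (T3 x + T4 0), 0⟫_ℂ = ⟪A (T1 x), x⟫_ℂ := by
      simp
    rw [← hval]
    exact hmem x 0 (by simp [hx1])
  have hT4 : wA A T4 ≤ wB A T1 T2 T3 T4 := by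
    apply Real.sSup_le _ hwB0
    rintro r ⟨x, hx, rfl⟩
    have hx1 : (⟪A x, x⟫_ℂ).re = 1 := by
      rw [aNorm] at hx
      exact Real.sqrt_eq_one.mp hx
    have hval : ⟪A (T1 0 + T2 x), 0⟫_ℂ + ⟪A (T3 0 + T4 x), x⟫_ℂ = ⟪A (T4 x), x⟫_ℂ := by
      simp
    rw [← hval]
    exact hmem 0 x (by simp [hx1])
  have hs2 : (((Real.sqrt 2)⁻¹ : ℝ) : ℂ) ^ 2 = 2⁻¹ := by
    rw [← Complex.ofReal_pow, sq_inv_sqrt_two]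
    norm_num
  have hT23 : wA A (T2 + T3) / 2 ≤ wB A T1 T2 T3 T4 := by
    rw [div_le_iff₀ (by norm_num : (0:ℝ) < 2)]
    apply Real.sSup_le _ (by linarith)
    rintro r ⟨x, hx, rfl⟩
    have hx1 : (⟪A x, x⟫_ℂ).re = 1 := by
      rw [aNorm] at hx
      exact Real.sqrt_eq_one.mp hx
    have hε1 : starRingEnd ℂ (1 : ℂ) * 1 = 1 := by simp
    have hεm1 : starRingEnd ℂ (-1 : ℂ) * (-1) = 1 := by simp
    have hV1 := hmem (((((Real.sqrt 2)⁻¹ : ℝ)) : ℂ) • x)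
      ((((((Real.sqrt 2)⁻¹ : ℝ)) : ℂ) * 1) • x) (Vconstraint A x hx1 1 hε1)
    have hVm1 := hmem (((((Real.sqrt 2)⁻¹ : ℝ)) : ℂ) • x)
      ((((((Real.sqrt 2)⁻¹ : ℝ)) : ℂ) * (-1)) • x) (Vconstraint A x hx1 (-1) hεm1)
    rw [Vval A T1 T2 T3 T4 x _ 1 hε1] at hV1
    rw [Vval A T1 T2 T3 T4 x _ (-1) hεm1] at hVm1
    have hval : ⟪A ((T2 + T3) x), x⟫_ℂ = ⟪A (T2 x), x⟫_ℂ + ⟪A (T3 x), x⟫_ℂ := by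
      simp [inner_add_left]
    rw [hval]
    have key : ⟪A (T2 x), x⟫_ℂ + ⟪A (T3 x), x⟫_ℂ =
        ((((Real.sqrt 2)⁻¹ : ℝ) : ℂ) ^ 2 * ((⟪A (T1 x), x⟫_ℂ + ⟪A (T4 x), x⟫_ℂ)
          + (starRingEnd ℂ 1 * ⟪A (T2 x), x⟫_ℂ + 1 * ⟪A (T3 x), x⟫_ℂ)))
        - ((((Real.sqrt 2)⁻¹ : ℝ) : ℂ) ^ 2 * ((⟪A (T1 x), x⟫_ℂ + ⟪A (T4 x), x⟫_ℂ)
          + (starRingEnd ℂ (-1) * ⟪A (T2 x), x⟫_ℂ + (-1) * ⟪A (T3 x), x⟫_ℂ))) := by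
      rw [hs2]
      simp only [map_one, map_neg]
      ring
    rw [key]
    calc ‖_ - _‖ ≤ ‖_‖ + ‖_‖ := norm_sub_le _ _
    _ ≤ wB A T1 T2 T3 T4 + wB A T1 T2 T3 T4 := add_le_add hV1 hVm1
    _ = wB A T1 T2 T3 T4 * 2 := by ring
  have hT23' : wA A (T2 - T3) / 2 ≤ wB A T1 T2 T3 T4 := by
    rw [div_le_iff₀ (by norm_num : (0:ℝ) < 2)]
    apply Real.sSup_le _ (by linarith)
    rintro r ⟨x, hx, rfl⟩
    have hx1 : (⟪A x, x⟫_ℂ).re = 1 := by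
      rw [aNorm] at hx
      exact Real.sqrt_eq_one.mp hx
    have hεI : starRingEnd ℂ (Complex.I) * Complex.I = 1 := by
      rw [Complex.conj_I]
      linear_combination -Complex.I_mul_I
    have hεmI : starRingEnd ℂ (-Complex.I) * (-Complex.I) = 1 := by
      rw [map_neg, Complex.conj_I]
      linear_combination -Complex.I_mul_I
    have hVI := hmem (((((Real.sqrt 2)⁻¹ : ℝ)) : ℂ) • x)
      ((((((Real.sqrt 2)⁻¹ : ℝ)) : ℂ) * Complex.I) • x) (Vconstraint A x hx1 Complex.I hεI)
    have hVmI := hmem (((((Real.sqrt 2)⁻¹ : ℝ)) : ℂ) • x)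
      ((((((Real.sqrt 2)⁻¹ : ℝ)) : ℂ) * (-Complex.I)) • x)
      (Vconstraint A x hx1 (-Complex.I) hεmI)
    rw [Vval A T1 T2 T3 T4 x _ Complex.I hεI] at hVI
    rw [Vval A T1 T2 T3 T4 x _ (-Complex.I) hεmI] at hVmI
    have hval : ⟪A ((T2 - T3) x), x⟫_ℂ = ⟪A (T2 x), x⟫_ℂ - ⟪A (T3 x), x⟫_ℂ := by
      simp [inner_sub_left]
    rw [hval]
    have hnorm : ‖⟪A (T2 x), x⟫_ℂ - ⟪A (T3 x), x⟫_ℂ‖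
        = ‖Complex.I * (⟪A (T2 x), x⟫_ℂ - ⟪A (T3 x), x⟫_ℂ)‖ := by
      rw [norm_mul, Complex.norm_I, one_mul]
    rw [hnorm]
    have key : Complex.I * (⟪A (T2 x), x⟫_ℂ - ⟪A (T3 x), x⟫_ℂ) =
        ((((Real.sqrt 2)⁻¹ : ℝ) : ℂ) ^ 2 * ((⟪A (T1 x), x⟫_ℂ + ⟪A (T4 x), x⟫_ℂ)
          + (starRingEnd ℂ (-Complex.I) * ⟪A (T2 x), x⟫_ℂ + (-Complex.I) * ⟪A (T3 x), x⟫_ℂ)))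
        - ((((Real.sqrt 2)⁻¹ : ℝ) : ℂ) ^ 2 * ((⟪A (T1 x), x⟫_ℂ + ⟪A (T4 x), x⟫_ℂ)
          + (starRingEnd ℂ Complex.I * ⟪A (T2 x), x⟫_ℂ + Complex.I * ⟪A (T3 x), x⟫_ℂ))) := by
      rw [hs2, map_neg, Complex.conj_I]
      ring
    rw [key]
    calc ‖_ - _‖ ≤ ‖_‖ + ‖_‖ := norm_sub_le _ _
    _ ≤ wB A T1 T2 T3 T4 + wB A T1 T2 T3 T4 := add_le_add hVmI hVI
    _ = wB A T1 T2 T3 T4 * 2 := by ring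
  exact max_le (max_le hT1 hT4) (max_le hT23 hT23')
end

section
/- Let T1, T2 be bounded linear operators on H with A-adjoints S1 = T1^{#_A}, S2 = T2^{#_A} (i.e. A∘S_i = T_i*∘A and range(S_i) ⊆ closure(range A)). Then max(‖T1+T2‖_A², ‖T1-T2‖_A²) ≥ max(‖T1² + T2²‖_A, ‖S1∘T1 + S2∘T2‖_A, ‖T1∘S1 + T2∘S2‖_A) + |‖T1+T2‖_A² - ‖T1-T2‖_A²| / 2. -/
open scoped InnerProductSpace
open ContinuousLinearMap

variable {H : Type*} [NormedAddCommGroup H] [InnerProductSpace ℂ H] [CompleteSpace H]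

namespace Stmt10Aux

lemma re_eq (z : ℂ) : z.re = RCLike.re z := rfl

section core
variable {A R : H →L[ℂ] H}

lemma hip (hR : ContinuousLinearMap.adjoint R = R) (hRA : R ∘L R = A) (x y : H) :
    ⟪A x, y⟫_ℂ = ⟪R x, R y⟫_ℂ := by
  have : A x = (ContinuousLinearMap.adjoint R) (R x) := by rw [hR, ← hRA]; rfl
  rw [this, ContinuousLinearMap.adjoint_inner_left]

lemma aNorm_R (hR : ContinuousLinearMap.adjoint R = R) (hRA : R ∘L R = A) (x : H) :
    aNorm A x = ‖R x‖ := by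
  rw [aNorm, hip hR hRA, re_eq, inner_self_eq_norm_sq, Real.sqrt_sq (norm_nonneg _)]

/-- Cauchy–Schwarz for the `A`-inner product, in `R`-form. -/
lemma csA (hR : ContinuousLinearMap.adjoint R = R) (hRA : R ∘L R = A) (x y : H) :
    ‖⟪A x, y⟫_ℂ‖ ≤ ‖R x‖ * ‖R y‖ := by
  rw [hip hR hRA]; exact norm_inner_le_norm _ _

/-- From `A ∘ S = T† ∘ A` deduce `A ∘ T = S† ∘ A`. -/
lemma flip_rel (hAsa : ContinuousLinearMap.adjoint A = A) {T S : H →L[ℂ] H}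
    (hS : A ∘L S = (ContinuousLinearMap.adjoint T) ∘L A) :
    A ∘L T = (ContinuousLinearMap.adjoint S) ∘L A := by
  have := congrArg ContinuousLinearMap.adjoint hS
  rw [ContinuousLinearMap.adjoint_comp, ContinuousLinearMap.adjoint_comp,
    ContinuousLinearMap.adjoint_adjoint, hAsa] at this
  exact this.symm

/-- The key quadratic identity: `‖R (T x)‖ ^ 2 = re ⟪A x, S (T x)⟫`. -/
lemma sq_eq (hR : ContinuousLinearMap.adjoint R = R) (hRA : R ∘L R = A)
    (hAsa : ContinuousLinearMap.adjoint A = A) {T S : H →L[ℂ] H}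
    (hS : A ∘L S = (ContinuousLinearMap.adjoint T) ∘L A) (x : H) :
    ‖R (T x)‖ ^ 2 = (⟪A x, S (T x)⟫_ℂ).re := by
  have h1 : A (T x) = (ContinuousLinearMap.adjoint S) (A x) := by
    have := congrFun (congrArg DFunLike.coe (flip_rel hAsa hS)) x
    simpa using this
  have h2 : ⟪A (T x), T x⟫_ℂ = ⟪A x, S (T x)⟫_ℂ := by
    rw [h1, ContinuousLinearMap.adjoint_inner_left]
  have h3 : ‖R (T x)‖ ^ 2 = (⟪A (T x), T x⟫_ℂ).re := by
    rw [hip hR hRA, re_eq, inner_self_eq_norm_sq]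
  rw [h3, h2]

lemma sq_le (hR : ContinuousLinearMap.adjoint R = R) (hRA : R ∘L R = A)
    (hAsa : ContinuousLinearMap.adjoint A = A) {T S : H →L[ℂ] H}
    (hS : A ∘L S = (ContinuousLinearMap.adjoint T) ∘L A) (x : H) :
    ‖R (T x)‖ ^ 2 ≤ ‖R x‖ * ‖R (S (T x))‖ := by
  rw [sq_eq hR hRA hAsa hS x]
  calc (⟪A x, S (T x)⟫_ℂ).re ≤ ‖⟪A x, S (T x)⟫_ℂ‖ := by
        rw [re_eq]; exact RCLike.re_le_norm _
    _ ≤ ‖R x‖ * ‖R (S (T x))‖ := csA hR hRA _ _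

/-- Vanishing: if `R x = 0` then `R (T x) = 0`, given an `A`-adjoint relation. -/
lemma R_T_eq_zero (hR : ContinuousLinearMap.adjoint R = R) (hRA : R ∘L R = A)
    (hAsa : ContinuousLinearMap.adjoint A = A) {T S : H →L[ℂ] H}
    (hS : A ∘L S = (ContinuousLinearMap.adjoint T) ∘L A) {x : H} (hx : R x = 0) :
    R (T x) = 0 := by
  have hAx : A x = 0 := by rw [← hRA]; simp [ContinuousLinearMap.comp_apply, hx]
  have : ‖R (T x)‖ ^ 2 = (⟪A x, S (T x)⟫_ℂ).re := sq_eq hR hRA hAsa hS x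
  rw [hAx] at this
  simp only [inner_zero_left, Complex.zero_re] at this
  have := pow_eq_zero_iff (n := 2) (by norm_num) |>.mp (by rw [this] : ‖R (T x)‖ ^ 2 = 0)
  exact norm_eq_zero.mp this

end core

section bound
variable {A R : H →L[ℂ] H}

lemma pow_rel {P : H →L[ℂ] H} (hP : A * P = star P * A) (n : ℕ) :
    A * P ^ n = star (P ^ n) * A := by
  rw [star_pow]
  induction n with
  | zero => simp
  | succ n ih => rw [pow_succ, pow_succ, ← mul_assoc, ih, mul_assoc, hP, ← mul_assoc]

lemma comp_rel (hAsa : ContinuousLinearMap.adjoint A = A) {T S : H →L[ℂ] H}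
    (hS : A ∘L S = (ContinuousLinearMap.adjoint T) ∘L A) :
    A ∘L (S ∘L T) = (ContinuousLinearMap.adjoint (S ∘L T)) ∘L A := by
  have hT := flip_rel hAsa hS
  rw [ContinuousLinearMap.adjoint_comp]
  calc A ∘L (S ∘L T) = (A ∘L S) ∘L T := by rw [ContinuousLinearMap.comp_assoc]
    _ = ((ContinuousLinearMap.adjoint T) ∘L A) ∘L T := by rw [hS]
    _ = (ContinuousLinearMap.adjoint T) ∘L (A ∘L T) := by rw [ContinuousLinearMap.comp_assoc]
    _ = (ContinuousLinearMap.adjoint T) ∘L ((ContinuousLinearMap.adjoint S) ∘L A) := by rw [hT]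
    _ = ((ContinuousLinearMap.adjoint T) ∘L (ContinuousLinearMap.adjoint S)) ∘L A := by
        rw [ContinuousLinearMap.comp_assoc]

/-- Quadratic iteration inequality for an `A`-symmetric operator `P`. -/
lemma g_sq_le (hR : ContinuousLinearMap.adjoint R = R) (hRA : R ∘L R = A)
    {P : H →L[ℂ] H} (hP : A ∘L P = (ContinuousLinearMap.adjoint P) ∘L A) (x : H) (n : ℕ) :
    ‖R ((P ^ n) x)‖ ^ 2 ≤ ‖R x‖ * ‖R ((P ^ (n + n)) x)‖ := by
  have hP' : A * P = star P * A := by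
    rw [ContinuousLinearMap.mul_def, ContinuousLinearMap.mul_def,
      ContinuousLinearMap.star_eq_adjoint]
    exact hP
  have hadj : ContinuousLinearMap.adjoint (P ^ n) = (ContinuousLinearMap.adjoint P) ^ n := by
    rw [← ContinuousLinearMap.star_eq_adjoint, ← ContinuousLinearMap.star_eq_adjoint, star_pow]
  have h1 : A ((P ^ n) x) = (ContinuousLinearMap.adjoint (P ^ n)) (A x) := by
    have := congrFun (congrArg DFunLike.coe (pow_rel hP' n)) x
    rw [hadj]
    simpa [ContinuousLinearMap.mul_def, ContinuousLinearMap.star_eq_adjoint] using this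
  have h2 : ⟪A ((P ^ n) x), (P ^ n) x⟫_ℂ = ⟪A x, (P ^ (n + n)) x⟫_ℂ := by
    rw [h1, ContinuousLinearMap.adjoint_inner_left]
    congr 1
    rw [pow_add, ContinuousLinearMap.mul_def]
    rfl
  have h3 : ‖R ((P ^ n) x)‖ ^ 2 = (⟪A ((P ^ n) x), (P ^ n) x⟫_ℂ).re := by
    rw [hip hR hRA, re_eq, inner_self_eq_norm_sq]
  calc ‖R ((P ^ n) x)‖ ^ 2 = (⟪A x, (P ^ (n + n)) x⟫_ℂ).re := by rw [h3, h2]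
    _ ≤ ‖⟪A x, (P ^ (n + n)) x⟫_ℂ‖ := by rw [re_eq]; exact RCLike.re_le_norm _
    _ ≤ ‖R x‖ * ‖R ((P ^ (n + n)) x)‖ := csA hR hRA _ _

lemma g_growth (hR : ContinuousLinearMap.adjoint R = R) (hRA : R ∘L R = A)
    {P : H →L[ℂ] H} (hP : A ∘L P = (ContinuousLinearMap.adjoint P) ∘L A) (x : H)
    (hc : 0 < ‖R x‖) (n : ℕ) :
    ‖R (P x)‖ ^ (2 ^ n) * ‖R x‖ ≤ ‖R ((P ^ (2 ^ n)) x)‖ * ‖R x‖ ^ (2 ^ n) := by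
  induction n with
  | zero => simp [pow_one]
  | succ n ih =>
    have h2 := g_sq_le hR hRA hP x (2 ^ n)
    have hsq : (‖R (P x)‖ ^ (2 ^ n) * ‖R x‖) ^ 2 ≤ (‖R ((P ^ (2 ^ n)) x)‖ * ‖R x‖ ^ (2 ^ n)) ^ 2 :=
      pow_le_pow_left₀ (by positivity) ih 2
    have key : ‖R (P x)‖ ^ (2 ^ (n + 1)) * ‖R x‖ * ‖R x‖ ≤
        ‖R ((P ^ (2 ^ (n + 1))) x)‖ * ‖R x‖ ^ (2 ^ (n + 1)) * ‖R x‖ := by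
      have e1 : 2 ^ (n + 1) = 2 ^ n + 2 ^ n := by ring
      calc ‖R (P x)‖ ^ (2 ^ (n + 1)) * ‖R x‖ * ‖R x‖
          = (‖R (P x)‖ ^ (2 ^ n) * ‖R x‖) ^ 2 := by rw [e1]; ring
        _ ≤ (‖R ((P ^ (2 ^ n)) x)‖ * ‖R x‖ ^ (2 ^ n)) ^ 2 := hsq
        _ = ‖R ((P ^ (2 ^ n)) x)‖ ^ 2 * (‖R x‖ ^ (2 ^ n)) ^ 2 := by ring
        _ ≤ (‖R x‖ * ‖R ((P ^ (2 ^ n + 2 ^ n)) x)‖) * (‖R x‖ ^ (2 ^ n)) ^ 2 := by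
            exact mul_le_mul_of_nonneg_right h2 (by positivity)
        _ = ‖R ((P ^ (2 ^ (n + 1))) x)‖ * ‖R x‖ ^ (2 ^ (n + 1)) * ‖R x‖ := by rw [e1]; ring
    exact le_of_mul_le_mul_right key hc

/-- The fundamental `A`-boundedness of operators admitting an `A`-adjoint. -/
lemma aBound (hR : ContinuousLinearMap.adjoint R = R) (hRA : R ∘L R = A)
    (hAsa : ContinuousLinearMap.adjoint A = A) {T S : H →L[ℂ] H}
    (hS : A ∘L S = (ContinuousLinearMap.adjoint T) ∘L A) (x : H) :
    ‖R (T x)‖ ^ 2 ≤ ‖S ∘L T‖ * ‖R x‖ ^ 2 := by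
  set P := S ∘L T with hPdef
  have hP : A ∘L P = (ContinuousLinearMap.adjoint P) ∘L A := comp_rel hAsa hS
  rcases eq_or_lt_of_le (norm_nonneg (R x)) with hc | hc
  · have hz : R (T x) = 0 := R_T_eq_zero hR hRA hAsa hS (norm_eq_zero.mp hc.symm)
    simp [hz, ← hc]
  · -- main case ‖R x‖ > 0
    have key1 : ‖R (T x)‖ ^ 2 ≤ ‖R x‖ * ‖R (P x)‖ := by
      have := sq_le hR hRA hAsa hS x
      simpa [hPdef] using this
    have claim : ‖R (P x)‖ ≤ ‖P‖ * ‖R x‖ := by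
      by_contra hlt
      push_neg at hlt
      have hg1pos : 0 < ‖R (P x)‖ := lt_of_le_of_lt (by positivity) hlt
      have hbd : ∀ n : ℕ, ‖R (P x)‖ ^ (2 ^ n) * ‖R x‖ ≤
          (‖R‖ * ‖x‖) * (‖P‖ * ‖R x‖) ^ (2 ^ n) := by
        intro n
        have h1 := g_growth hR hRA hP x hc n
        have h2 : ‖R ((P ^ (2 ^ n)) x)‖ ≤ ‖R‖ * ‖x‖ * ‖P‖ ^ (2 ^ n) := by
          calc ‖R ((P ^ (2 ^ n)) x)‖ ≤ ‖R‖ * ‖(P ^ (2 ^ n)) x‖ :=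
                ContinuousLinearMap.le_opNorm _ _
            _ ≤ ‖R‖ * (‖P ^ (2 ^ n)‖ * ‖x‖) := by
                exact mul_le_mul_of_nonneg_left (ContinuousLinearMap.le_opNorm _ _)
                  (norm_nonneg _)
            _ ≤ ‖R‖ * (‖P‖ ^ (2 ^ n) * ‖x‖) := by
                have := norm_pow_le' P (n := 2 ^ n) (by positivity)
                exact mul_le_mul_of_nonneg_left
                  (mul_le_mul_of_nonneg_right this (norm_nonneg _)) (norm_nonneg _)
            _ = ‖R‖ * ‖x‖ * ‖P‖ ^ (2 ^ n) := by ring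
        calc ‖R (P x)‖ ^ (2 ^ n) * ‖R x‖ ≤ ‖R ((P ^ (2 ^ n)) x)‖ * ‖R x‖ ^ (2 ^ n) := h1
          _ ≤ (‖R‖ * ‖x‖ * ‖P‖ ^ (2 ^ n)) * ‖R x‖ ^ (2 ^ n) := by
              exact mul_le_mul_of_nonneg_right h2 (by positivity)
          _ = (‖R‖ * ‖x‖) * (‖P‖ * ‖R x‖) ^ (2 ^ n) := by rw [mul_pow]; ring
      set M := ‖P‖ * ‖R x‖ with hM
      rcases eq_or_lt_of_le (by positivity : (0:ℝ) ≤ M) with hM0 | hMpos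
      · have := hbd 1
        rw [← hM0] at this
        have hz : (0:ℝ) ^ 2 ^ 1 = 0 := by norm_num
        rw [hz, mul_zero] at this
        nlinarith [mul_pos (pow_pos hg1pos (2 ^ 1)) hc]
      · have hq : 1 < ‖R (P x)‖ / M := (one_lt_div hMpos).mpr hlt
        obtain ⟨n, hn⟩ := pow_unbounded_of_one_lt ((‖R‖ * ‖x‖) / ‖R x‖) hq
        have h2n : (‖R (P x)‖ / M) ^ n ≤ (‖R (P x)‖ / M) ^ (2 ^ n) :=
          pow_le_pow_right₀ hq.le (Nat.lt_two_pow_self (n := n)).le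
        have hfin : (‖R (P x)‖ / M) ^ (2 ^ n) ≤ (‖R‖ * ‖x‖) / ‖R x‖ := by
          rw [div_pow, div_le_div_iff₀ (by positivity) hc]
          calc ‖R (P x)‖ ^ (2 ^ n) * ‖R x‖ ≤ (‖R‖ * ‖x‖) * M ^ (2 ^ n) := hbd n
            _ = ‖R‖ * ‖x‖ * M ^ (2 ^ n) := by ring
        linarith [lt_of_lt_of_le hn (le_trans h2n hfin)]
    calc ‖R (T x)‖ ^ 2 ≤ ‖R x‖ * ‖R (P x)‖ := key1
      _ ≤ ‖R x‖ * (‖P‖ * ‖R x‖) := mul_le_mul_of_nonneg_left claim (norm_nonneg _)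
      _ = ‖P‖ * ‖R x‖ ^ 2 := by ring

end bound

section opnorm
variable {A R : H →L[ℂ] H}

lemma aOpNorm_nonneg (A T : H →L[ℂ] H) : 0 ≤ aOpNorm A T :=
  Real.sSup_nonneg (by rintro r ⟨x, -, -, rfl⟩; exact Real.sqrt_nonneg _)

lemma aOpNorm_le_of (A T : H →L[ℂ] H) {C : ℝ} (hC : 0 ≤ C)
    (h : ∀ x, aNorm A (T x) ≤ C * aNorm A x) : aOpNorm A T ≤ C := by
  apply Real.sSup_le _ hC
  rintro r ⟨x, -, h1, rfl⟩
  simpa [h1] using h x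

lemma le_aOpNorm (hR : ContinuousLinearMap.adjoint R = R) (hRA : R ∘L R = A)
    (hAsa : ContinuousLinearMap.adjoint A = A) {T S : H →L[ℂ] H}
    (hS : A ∘L S = (ContinuousLinearMap.adjoint T) ∘L A) (x : H) :
    ‖R (T x)‖ ≤ aOpNorm A T * ‖R x‖ := by
  have hbdd : BddAbove {r : ℝ | ∃ x : H, x ∈ closure (Set.range (⇑A)) ∧ aNorm A x = 1 ∧
      r = aNorm A (T x)} := by
    refine ⟨Real.sqrt ‖S ∘L T‖, ?_⟩
    rintro r ⟨y, -, h1, rfl⟩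
    rw [aNorm_R hR hRA] at h1 ⊢
    have h0 := aBound hR hRA hAsa hS y
    rw [h1] at h0
    have h2 : ‖R (T y)‖ ^ 2 ≤ ‖S ∘L T‖ := by simpa using h0
    calc ‖R (T y)‖ = Real.sqrt (‖R (T y)‖ ^ 2) := (Real.sqrt_sq (norm_nonneg _)).symm
      _ ≤ Real.sqrt ‖S ∘L T‖ := Real.sqrt_le_sqrt h2
  set K : Submodule ℂ H := (LinearMap.range (A : H →ₗ[ℂ] H)).topologicalClosure with hK
  have hKset : (K : Set H) = closure (Set.range (⇑A)) := by
    rw [hK, Submodule.topologicalClosure_coe, LinearMap.coe_range]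
    simp
  haveI : CompleteSpace K :=
    (Submodule.isClosed_topologicalClosure _).completeSpace_coe
  obtain ⟨y, hy, z, hz, hxyz⟩ := K.exists_add_mem_mem_orthogonal x
  rw [Submodule.mem_orthogonal] at hz
  have hAz : A z = 0 := by
    have h1 : ∀ w : H, ⟪w, A z⟫_ℂ = 0 := by
      intro w
      rw [← ContinuousLinearMap.adjoint_inner_left, hAsa]
      refine hz (A w) ?_
      rw [hK]
      exact Submodule.le_topologicalClosure _ (LinearMap.mem_range_self _ w)
    have := h1 (A z)
    rwa [inner_self_eq_zero] at this
  have hRz : R z = 0 := by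
    have h2 : ‖R z‖ ^ 2 = (⟪A z, z⟫_ℂ).re := by
      rw [hip hR hRA, re_eq, inner_self_eq_norm_sq]
    rw [hAz] at h2
    simp only [inner_zero_left, Complex.zero_re] at h2
    exact norm_eq_zero.mp (pow_eq_zero_iff two_ne_zero |>.mp h2)
  have hRTz : R (T z) = 0 := R_T_eq_zero hR hRA hAsa hS hRz
  have hx1 : R x = R y := by rw [hxyz, map_add, hRz, add_zero]
  have hx2 : R (T x) = R (T y) := by rw [hxyz, map_add, map_add, hRTz, add_zero]
  rw [hx1, hx2]
  rcases eq_or_lt_of_le (norm_nonneg (R y)) with hc | hc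
  · have hz2 : R (T y) = 0 := R_T_eq_zero hR hRA hAsa hS (norm_eq_zero.mp hc.symm)
    simp [hz2, ← hc]
  · set c : ℝ := ‖R y‖ with hcdef
    set y' : H := ((c : ℂ))⁻¹ • y with hy'
    have hy'K : y' ∈ K := K.smul_mem _ hy
    have hnc : ‖((c : ℂ))⁻¹‖ = c⁻¹ := by
      rw [norm_inv, Complex.norm_real, Real.norm_eq_abs, abs_of_pos hc]
    have hy'norm : aNorm A y' = 1 := by
      rw [aNorm_R hR hRA, hy', map_smul, norm_smul, hnc, ← hcdef]
      field_simp
    have hy'cl : y' ∈ closure (Set.range (⇑A)) := by rw [← hKset]; exact hy'K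
    have hmem : aNorm A (T y') ≤ aOpNorm A T :=
      le_csSup hbdd ⟨y', hy'cl, hy'norm, rfl⟩
    have hval : aNorm A (T y') = c⁻¹ * ‖R (T y)‖ := by
      rw [aNorm_R hR hRA, hy', map_smul, map_smul, norm_smul, hnc]
    rw [hval] at hmem
    calc ‖R (T y)‖ = c * (c⁻¹ * ‖R (T y)‖) := by field_simp
      _ ≤ c * aOpNorm A T := by
          exact mul_le_mul_of_nonneg_left hmem hc.le
      _ = aOpNorm A T * c := by ring

/-- `‖T^{#_A}‖_A ≤ ‖T‖_A`. -/
lemma adj_aOpNorm_le (hR : ContinuousLinearMap.adjoint R = R) (hRA : R ∘L R = A)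
    (hAsa : ContinuousLinearMap.adjoint A = A) {T S : H →L[ℂ] H}
    (hS : A ∘L S = (ContinuousLinearMap.adjoint T) ∘L A) :
    aOpNorm A S ≤ aOpNorm A T := by
  apply aOpNorm_le_of A S (aOpNorm_nonneg A T)
  intro x
  rw [aNorm_R hR hRA, aNorm_R hR hRA]
  rcases eq_or_lt_of_le (norm_nonneg (R (S x))) with hc | hc
  · rw [← hc]
    exact mul_nonneg (aOpNorm_nonneg A T) (norm_nonneg _)
  · have h1 : ‖R (S x)‖ ^ 2 ≤ ‖R x‖ * ‖R (T (S x))‖ :=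
      sq_le hR hRA hAsa (flip_rel hAsa hS) x
    have h2 : ‖R (T (S x))‖ ≤ aOpNorm A T * ‖R (S x)‖ := le_aOpNorm hR hRA hAsa hS (S x)
    have h3 : ‖R (S x)‖ ^ 2 ≤ ‖R x‖ * (aOpNorm A T * ‖R (S x)‖) :=
      le_trans h1 (mul_le_mul_of_nonneg_left h2 (norm_nonneg _))
    nlinarith [hc]

end opnorm

end Stmt10Aux

theorem stmt10 (A T1 T2 S1 S2 : H →L[ℂ] H) (hA : A.IsPositive)
    (hS1 : A ∘L S1 = (ContinuousLinearMap.adjoint T1) ∘L A)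
    (hS1r : Set.range (⇑S1) ⊆ closure (Set.range (⇑A)))
    (hS2 : A ∘L S2 = (ContinuousLinearMap.adjoint T2) ∘L A)
    (hS2r : Set.range (⇑S2) ⊆ closure (Set.range (⇑A))) :
    max ((aOpNorm A (T1 + T2)) ^ 2) ((aOpNorm A (T1 - T2)) ^ 2) ≥
      max (aOpNorm A (T1 ∘L T1 + T2 ∘L T2))
          (max (aOpNorm A (S1 ∘L T1 + S2 ∘L T2)) (aOpNorm A (T1 ∘L S1 + T2 ∘L S2))) +
        |(aOpNorm A (T1 + T2)) ^ 2 - (aOpNorm A (T1 - T2)) ^ 2| / 2 := by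
  classical
  have h0 : (0:H→L[ℂ]H) ≤ A := (ContinuousLinearMap.nonneg_iff_isPositive A).mpr hA
  obtain ⟨R, hR, hRA⟩ : ∃ R : H →L[ℂ] H, ContinuousLinearMap.adjoint R = R ∧ R ∘L R = A := by
    refine ⟨CFC.sqrt A, ?_, ?_⟩
    · have := IsSelfAdjoint.of_nonneg (CFC.sqrt_nonneg (a := A))
      rwa [IsSelfAdjoint, ContinuousLinearMap.star_eq_adjoint] at this
    · have := CFC.sqrt_mul_sqrt_self A h0
      rwa [ContinuousLinearMap.mul_def] at this
  have hAsa : ContinuousLinearMap.adjoint A = A := by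
    rw [← ContinuousLinearMap.star_eq_adjoint]; exact hA.isSelfAdjoint
  have hadd : ContinuousLinearMap.adjoint (T1 + T2)
      = ContinuousLinearMap.adjoint T1 + ContinuousLinearMap.adjoint T2 := by
    simp only [← ContinuousLinearMap.star_eq_adjoint, star_add]
  have hsub : ContinuousLinearMap.adjoint (T1 - T2)
      = ContinuousLinearMap.adjoint T1 - ContinuousLinearMap.adjoint T2 := by
    simp only [← ContinuousLinearMap.star_eq_adjoint, star_sub]
  have hU : A ∘L (S1 + S2) = (ContinuousLinearMap.adjoint (T1 + T2)) ∘L A := by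
    rw [ContinuousLinearMap.comp_add, hS1, hS2, hadd, ContinuousLinearMap.add_comp]
  have hV : A ∘L (S1 - S2) = (ContinuousLinearMap.adjoint (T1 - T2)) ∘L A := by
    rw [ContinuousLinearMap.comp_sub, hS1, hS2, hsub, ContinuousLinearMap.sub_comp]
  have haU : 0 ≤ aOpNorm A (T1 + T2) := Stmt10Aux.aOpNorm_nonneg A _
  have haV : 0 ≤ aOpNorm A (T1 - T2) := Stmt10Aux.aOpNorm_nonneg A _
  have hUbd : ∀ y, ‖R ((T1 + T2) y)‖ ≤ aOpNorm A (T1 + T2) * ‖R y‖ :=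
    Stmt10Aux.le_aOpNorm hR hRA hAsa hU
  have hVbd : ∀ y, ‖R ((T1 - T2) y)‖ ≤ aOpNorm A (T1 - T2) * ‖R y‖ :=
    Stmt10Aux.le_aOpNorm hR hRA hAsa hV
  have hSUbd : ∀ y, ‖R ((S1 + S2) y)‖ ≤ aOpNorm A (T1 + T2) * ‖R y‖ := fun y =>
    le_trans (Stmt10Aux.le_aOpNorm hR hRA hAsa (Stmt10Aux.flip_rel hAsa hU) y)
      (mul_le_mul_of_nonneg_right (Stmt10Aux.adj_aOpNorm_le hR hRA hAsa hU) (norm_nonneg _))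
  have hSVbd : ∀ y, ‖R ((S1 - S2) y)‖ ≤ aOpNorm A (T1 - T2) * ‖R y‖ := fun y =>
    le_trans (Stmt10Aux.le_aOpNorm hR hRA hAsa (Stmt10Aux.flip_rel hAsa hV) y)
      (mul_le_mul_of_nonneg_right (Stmt10Aux.adj_aOpNorm_le hR hRA hAsa hV) (norm_nonneg _))
  -- generic combination bound
  have comb : ∀ (W C1 D1 C2 D2 : H →L[ℂ] H) (a1 a2 : ℝ), 0 ≤ a1 → 0 ≤ a2 →
      (∀ y, ‖R (C1 y)‖ ≤ a1 * ‖R y‖) → (∀ y, ‖R (D1 y)‖ ≤ a1 * ‖R y‖) →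
      (∀ y, ‖R (C2 y)‖ ≤ a2 * ‖R y‖) → (∀ y, ‖R (D2 y)‖ ≤ a2 * ‖R y‖) →
      (∀ x, W x = (2⁻¹:ℂ) • (C1 (D1 x) + C2 (D2 x))) →
      aOpNorm A W ≤ (a1 ^ 2 + a2 ^ 2) / 2 := by
    intro W C1 D1 C2 D2 a1 a2 h1 h2 hC1 hD1 hC2 hD2 hW
    apply Stmt10Aux.aOpNorm_le_of A W (by positivity)
    intro x
    rw [Stmt10Aux.aNorm_R hR hRA, Stmt10Aux.aNorm_R hR hRA, hW x, map_smul, norm_smul]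
    have e1 : ‖R (C1 (D1 x) + C2 (D2 x))‖ ≤ (a1 ^ 2 + a2 ^ 2) * ‖R x‖ := by
      rw [map_add]
      calc ‖R (C1 (D1 x)) + R (C2 (D2 x))‖ ≤ ‖R (C1 (D1 x))‖ + ‖R (C2 (D2 x))‖ :=
            norm_add_le _ _
        _ ≤ a1 ^ 2 * ‖R x‖ + a2 ^ 2 * ‖R x‖ := by
            have k1 : ‖R (C1 (D1 x))‖ ≤ a1 ^ 2 * ‖R x‖ := by
              calc ‖R (C1 (D1 x))‖ ≤ a1 * ‖R (D1 x)‖ := hC1 _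
                _ ≤ a1 * (a1 * ‖R x‖) := mul_le_mul_of_nonneg_left (hD1 x) h1
                _ = a1 ^ 2 * ‖R x‖ := by ring
            have k2 : ‖R (C2 (D2 x))‖ ≤ a2 ^ 2 * ‖R x‖ := by
              calc ‖R (C2 (D2 x))‖ ≤ a2 * ‖R (D2 x)‖ := hC2 _
                _ ≤ a2 * (a2 * ‖R x‖) := mul_le_mul_of_nonneg_left (hD2 x) h2
                _ = a2 ^ 2 * ‖R x‖ := by ring
            exact add_le_add k1 k2
        _ = (a1 ^ 2 + a2 ^ 2) * ‖R x‖ := by ring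
    have e2 : ‖(2⁻¹:ℂ)‖ = 2⁻¹ := by norm_num
    rw [e2]
    linarith
  have b1 : aOpNorm A (T1 ∘L T1 + T2 ∘L T2) ≤
      ((aOpNorm A (T1 + T2)) ^ 2 + (aOpNorm A (T1 - T2)) ^ 2) / 2 := by
    refine comb _ (T1 + T2) (T1 + T2) (T1 - T2) (T1 - T2) _ _ haU haV hUbd hUbd hVbd hVbd ?_
    intro x
    simp only [ContinuousLinearMap.add_apply, ContinuousLinearMap.sub_apply,
      ContinuousLinearMap.comp_apply, map_add, map_sub]
    module
  have b2 : aOpNorm A (S1 ∘L T1 + S2 ∘L T2) ≤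
      ((aOpNorm A (T1 + T2)) ^ 2 + (aOpNorm A (T1 - T2)) ^ 2) / 2 := by
    refine comb _ (S1 + S2) (T1 + T2) (S1 - S2) (T1 - T2) _ _ haU haV hSUbd hUbd hSVbd hVbd ?_
    intro x
    simp only [ContinuousLinearMap.add_apply, ContinuousLinearMap.sub_apply,
      ContinuousLinearMap.comp_apply, map_add, map_sub]
    module
  have b3 : aOpNorm A (T1 ∘L S1 + T2 ∘L S2) ≤
      ((aOpNorm A (T1 + T2)) ^ 2 + (aOpNorm A (T1 - T2)) ^ 2) / 2 := by
    refine comb _ (T1 + T2) (S1 + S2) (T1 - T2) (S1 - S2) _ _ haU haV hUbd hSUbd hVbd hSVbd ?_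
    intro x
    simp only [ContinuousLinearMap.add_apply, ContinuousLinearMap.sub_apply,
      ContinuousLinearMap.comp_apply, map_add, map_sub]
    module
  set a := (aOpNorm A (T1 + T2)) ^ 2 with ha
  set b := (aOpNorm A (T1 - T2)) ^ 2 with hb
  have hmax : max (aOpNorm A (T1 ∘L T1 + T2 ∘L T2))
      (max (aOpNorm A (S1 ∘L T1 + S2 ∘L T2)) (aOpNorm A (T1 ∘L S1 + T2 ∘L S2)))
      ≤ (a + b) / 2 := max_le b1 (max_le b2 b3)
  rcases le_total a b with h | h
  · rw [abs_of_nonpos (by linarith), max_eq_right h]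
    linarith
  · rw [abs_of_nonneg (by linarith), max_eq_left h]
    linarith
end

section
/- Let T1, T2 be bounded linear operators on H with A-adjoints S1 = T1^{#_A}, S2 = T2^{#_A} (i.e. A∘S_i = T_i*∘A and range(S_i) ⊆ closure(range A)). Then min(‖T1+T2‖_A², ‖T1-T2‖_A²) ≥ max(‖T1² + T2²‖_A, ‖S1∘T1 + S2∘T2‖_A, ‖T1∘S1 + T2∘S2‖_A) - |‖T1+T2‖_A² - ‖T1-T2‖_A²| / 2. -/
open scoped InnerProductSpace
open ContinuousLinearMap

variable {H : Type*} [NormedAddCommGroup H] [InnerProductSpace ℂ H] [CompleteSpace H]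

lemma innerA_eq (A B : H →L[ℂ] H) (hB : IsSelfAdjoint B) (hBA : B ∘L B = A) (x y : H) :
    ⟪A x, y⟫_ℂ = ⟪B x, B y⟫_ℂ := by
  rw [← hBA, comp_apply]
  nth_rewrite 1 [← hB.adjoint_eq]
  rw [adjoint_inner_left]

lemma normB_sq (A B : H →L[ℂ] H) (hB : IsSelfAdjoint B) (hBA : B ∘L B = A) (x : H) :
    (⟪A x, x⟫_ℂ).re = ‖B x‖ ^ 2 := by
  rw [innerA_eq A B hB hBA]
  have h := inner_self_eq_norm_sq (𝕜 := ℂ) (B x)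
  simpa using h

lemma powComm (A R : H →L[ℂ] H) (hR : A ∘L R = (adjoint R) ∘L A) (k : ℕ) (x : H) :
    A ((R ^ k) x) = ((adjoint R) ^ k) (A x) := by
  induction k generalizing x with
  | zero => simp
  | succ n ih =>
    have h1 : A (R x) = (adjoint R) (A x) := by
      have := DFunLike.congr_fun hR x
      simpa using this
    calc A ((R ^ (n + 1)) x) = A ((R ^ n) (R x)) := by rw [pow_succ]; rfl
    _ = ((adjoint R) ^ n) (A (R x)) := ih (R x)
    _ = ((adjoint R) ^ n) ((adjoint R) (A x)) := by rw [h1]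
    _ = ((adjoint R) ^ (n + 1)) (A x) := by rw [pow_succ]; rfl

lemma keyIneq (A B R : H →L[ℂ] H) (hB : IsSelfAdjoint B) (hBA : B ∘L B = A)
    (hR : A ∘L R = (adjoint R) ∘L A) (k : ℕ) (x : H) :
    ‖B ((R ^ k) x)‖ ^ 2 ≤ ‖B ((R ^ (2 * k)) x)‖ * ‖B x‖ := by
  have h1 : (‖B ((R ^ k) x)‖ : ℝ) ^ 2 = (⟪A ((R ^ k) x), (R ^ k) x⟫_ℂ).re :=
    (normB_sq A B hB hBA _).symm
  have h2 : ⟪A ((R ^ k) x), (R ^ k) x⟫_ℂ = ⟪A ((R ^ (2 * k)) x), x⟫_ℂ := by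
    rw [← adjoint_inner_left (R ^ k)]
    have hadj : adjoint (R ^ k) = (adjoint R) ^ k := by
      rw [← star_eq_adjoint, ← star_eq_adjoint, star_pow]
    rw [hadj, ← powComm A R hR k ((R ^ k) x)]
    have hkk : (R ^ k) ((R ^ k) x) = (R ^ (2 * k)) x := by
      rw [two_mul, pow_add]; rfl
    rw [hkk]
  have h3 : (⟪A ((R ^ (2 * k)) x), x⟫_ℂ).re ≤ ‖B ((R ^ (2 * k)) x)‖ * ‖B x‖ := by
    rw [innerA_eq A B hB hBA]
    exact le_trans (Complex.re_le_norm _) (by exact norm_inner_le_norm _ _)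
  rw [h1, h2]; exact h3

lemma L0 (A B R : H →L[ℂ] H) (hB : IsSelfAdjoint B) (hBA : B ∘L B = A)
    (hR : A ∘L R = (adjoint R) ∘L A) (x : H) :
    ‖B (R x)‖ ≤ ‖R‖ * ‖B x‖ := by
  by_cases hx0 : ‖B x‖ = 0
  · have h := keyIneq A B R hB hBA hR 1 x
    rw [pow_one, hx0, mul_zero] at h
    have h2 : ‖B (R x)‖ = 0 := by nlinarith [norm_nonneg (B (R x))]
    rw [hx0, mul_zero, h2]
  · have hxpos : 0 < ‖B x‖ := lt_of_le_of_ne (norm_nonneg _) (Ne.symm hx0)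
    set c : ℂ := ((‖B x‖⁻¹ : ℝ) : ℂ) with hc
    set y : H := c • x with hy
    have hyn : ‖B y‖ = 1 := by
      rw [hy, map_smul, norm_smul, hc]
      simp [abs_of_pos (inv_pos.mpr hxpos), inv_mul_cancel₀ hx0]
    have claim : ‖B (R y)‖ ≤ ‖R‖ := by
      by_contra hlt
      push_neg at hlt
      have ind : ∀ n : ℕ, ‖B (R y)‖ ^ (2 ^ n) ≤ ‖B ((R ^ (2 ^ n)) y)‖ := by
        intro n
        induction n with
        | zero => simp
        | succ m ih =>
          have e1 : (2 : ℕ) ^ (m + 1) = 2 * 2 ^ m := by ring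
          calc ‖B (R y)‖ ^ (2 ^ (m + 1)) = (‖B (R y)‖ ^ (2 ^ m)) ^ 2 := by
                rw [← pow_mul]; ring_nf
          _ ≤ (‖B ((R ^ (2 ^ m)) y)‖) ^ 2 := by
                apply pow_le_pow_left₀ (by positivity) ih
          _ ≤ ‖B ((R ^ (2 * 2 ^ m)) y)‖ * ‖B y‖ := keyIneq A B R hB hBA hR (2 ^ m) y
          _ = ‖B ((R ^ (2 ^ (m + 1))) y)‖ := by rw [hyn, mul_one, e1]
      have bound : ∀ n : ℕ, ‖B ((R ^ (2 ^ n)) y)‖ ≤ ‖B‖ * ‖y‖ * ‖R‖ ^ (2 ^ n) := by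
        intro n
        calc ‖B ((R ^ (2 ^ n)) y)‖ ≤ ‖B‖ * ‖(R ^ (2 ^ n)) y‖ := le_opNorm _ _
        _ ≤ ‖B‖ * (‖R ^ (2 ^ n)‖ * ‖y‖) := by
              exact mul_le_mul_of_nonneg_left (le_opNorm _ _) (norm_nonneg _)
        _ ≤ ‖B‖ * (‖R‖ ^ (2 ^ n) * ‖y‖) := by
              refine mul_le_mul_of_nonneg_left ?_ (norm_nonneg _)
              exact mul_le_mul_of_nonneg_right (norm_pow_le' R (by positivity)) (norm_nonneg _)
        _ = ‖B‖ * ‖y‖ * ‖R‖ ^ (2 ^ n) := by ring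
      rcases eq_or_lt_of_le (norm_nonneg R) with hR0 | hR0
      · have : R = 0 := norm_eq_zero.mp hR0.symm
        rw [this] at hlt
        simp at hlt
      · set q : ℝ := ‖B (R y)‖ / ‖R‖ with hq
        have hq1 : 1 < q := (one_lt_div hR0).mpr hlt
        have hqb : ∀ n : ℕ, q ^ (2 ^ n) ≤ ‖B‖ * ‖y‖ := by
          intro n
          rw [hq, div_pow]
          rw [div_le_iff₀ (by positivity)]
          calc ‖B (R y)‖ ^ (2 ^ n) ≤ ‖B ((R ^ (2 ^ n)) y)‖ := ind n
          _ ≤ ‖B‖ * ‖y‖ * ‖R‖ ^ (2 ^ n) := bound n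
        obtain ⟨n, hn⟩ := pow_unbounded_of_one_lt (‖B‖ * ‖y‖) hq1
        have h5 : q ^ n ≤ q ^ (2 ^ n) := pow_le_pow_right₀ hq1.le (Nat.lt_two_pow_self).le
        linarith [hqb n]
    have hRy : R y = c • (R x) := by rw [hy, map_smul]
    have : ‖B (R y)‖ = (‖B x‖)⁻¹ * ‖B (R x)‖ := by
      rw [hRy, map_smul, norm_smul, hc]
      simp [abs_of_pos (inv_pos.mpr hxpos)]
    rw [this] at claim
    calc ‖B (R x)‖ = ‖B x‖ * ((‖B x‖)⁻¹ * ‖B (R x)‖) := by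
          field_simp
    _ ≤ ‖B x‖ * ‖R‖ := mul_le_mul_of_nonneg_left claim (norm_nonneg _)
    _ = ‖R‖ * ‖B x‖ := mul_comm _ _

lemma aNorm_eq (A B : H →L[ℂ] H) (hB : IsSelfAdjoint B) (hBA : B ∘L B = A) (x : H) :
    aNorm A x = ‖B x‖ := by
  rw [aNorm, normB_sq A B hB hBA, Real.sqrt_sq (norm_nonneg _)]

section Part2
variable {H : Type*} [NormedAddCommGroup H] [InnerProductSpace ℂ H] [CompleteSpace H]

lemma flipAdj (A U W : H →L[ℂ] H) (hA' : adjoint A = A)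
    (hW : A ∘L W = (adjoint U) ∘L A) : A ∘L U = (adjoint W) ∘L A := by
  have h := congrArg adjoint hW
  rw [adjoint_comp, adjoint_comp, adjoint_adjoint, hA'] at h
  exact h.symm

lemma compAdj (A U W : H →L[ℂ] H) (hA' : adjoint A = A)
    (hW : A ∘L W = (adjoint U) ∘L A) :
    A ∘L (W ∘L U) = (adjoint (W ∘L U)) ∘L A := by
  rw [adjoint_comp]
  calc A ∘L (W ∘L U) = (A ∘L W) ∘L U := by rw [comp_assoc]
  _ = ((adjoint U) ∘L A) ∘L U := by rw [hW]
  _ = (adjoint U) ∘L (A ∘L U) := by rw [comp_assoc]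
  _ = (adjoint U) ∘L ((adjoint W) ∘L A) := by rw [flipAdj A U W hA' hW]
  _ = ((adjoint U) ∘L (adjoint W)) ∘L A := by rw [comp_assoc]

/-- squared pointwise estimate -/
lemma L1sq (A B U W : H →L[ℂ] H) (hB : IsSelfAdjoint B) (hBA : B ∘L B = A)
    (hW : A ∘L W = (adjoint U) ∘L A) (y : H) :
    ‖B (U y)‖ ^ 2 ≤ ‖B (W (U y))‖ * ‖B y‖ := by
  have h1 : (‖B (U y)‖ : ℝ) ^ 2 = (⟪A (U y), U y⟫_ℂ).re := (normB_sq A B hB hBA _).symm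
  have h2 : ⟪A (U y), U y⟫_ℂ = ⟪A (W (U y)), y⟫_ℂ := by
    rw [← adjoint_inner_left U]
    have : (adjoint U) (A (U y)) = A (W (U y)) := by
      have := DFunLike.congr_fun hW (U y)
      simpa using this.symm
    rw [this]
  have h3 : (⟪A (W (U y)), y⟫_ℂ).re ≤ ‖B (W (U y))‖ * ‖B y‖ := by
    rw [innerA_eq A B hB hBA]
    exact le_trans (Complex.re_le_norm _) (by exact norm_inner_le_norm _ _)
  rw [h1, h2]; exact h3

/-- pointwise linear bound with operator-norm constant -/
lemma L1 (A B U W : H →L[ℂ] H) (hA' : adjoint A = A) (hB : IsSelfAdjoint B) (hBA : B ∘L B = A)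
    (hW : A ∘L W = (adjoint U) ∘L A) (y : H) :
    ‖B (U y)‖ ≤ Real.sqrt ‖W ∘L U‖ * ‖B y‖ := by
  have h1 := L1sq A B U W hB hBA hW y
  have h2 : ‖B ((W ∘L U) y)‖ ≤ ‖W ∘L U‖ * ‖B y‖ :=
    L0 A B (W ∘L U) hB hBA (compAdj A U W hA' hW) y
  rw [comp_apply] at h2
  have h3 : ‖B (U y)‖ ^ 2 ≤ ‖W ∘L U‖ * ‖B y‖ ^ 2 := by nlinarith [norm_nonneg (B y)]
  calc ‖B (U y)‖ = Real.sqrt (‖B (U y)‖ ^ 2) := (Real.sqrt_sq (norm_nonneg _)).symm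
  _ ≤ Real.sqrt (‖W ∘L U‖ * ‖B y‖ ^ 2) := Real.sqrt_le_sqrt h3
  _ = Real.sqrt ‖W ∘L U‖ * ‖B y‖ := by
      rw [Real.sqrt_mul (norm_nonneg _), Real.sqrt_sq (norm_nonneg _)]

lemma aOpNorm_nonneg (A T : H →L[ℂ] H) : 0 ≤ aOpNorm A T := by
  apply Real.sSup_nonneg
  rintro r ⟨x, -, -, rfl⟩
  exact Real.sqrt_nonneg _

lemma aOpNorm_le (A T : H →L[ℂ] H) {c : ℝ} (hc : 0 ≤ c)
    (h : ∀ x : H, x ∈ closure (Set.range (⇑A)) → aNorm A x = 1 → aNorm A (T x) ≤ c) :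
    aOpNorm A T ≤ c := by
  apply Real.sSup_le _ hc
  rintro r ⟨x, hx, h1, rfl⟩
  exact h x hx h1

lemma bddAboveSet (A B U W : H →L[ℂ] H) (hA' : adjoint A = A) (hB : IsSelfAdjoint B)
    (hBA : B ∘L B = A) (hW : A ∘L W = (adjoint U) ∘L A) :
    BddAbove {r : ℝ | ∃ x : H, x ∈ closure (Set.range (⇑A)) ∧ aNorm A x = 1 ∧
      r = aNorm A (U x)} := by
  refine ⟨Real.sqrt ‖W ∘L U‖, ?_⟩
  rintro r ⟨x, -, h1, rfl⟩
  rw [aNorm_eq A B hB hBA] at h1 ⊢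
  have := L1 A B U W hA' hB hBA hW x
  rw [h1, mul_one] at this
  exact this

lemma le_aOpNorm (A B U W : H →L[ℂ] H) (hA' : adjoint A = A) (hB : IsSelfAdjoint B)
    (hBA : B ∘L B = A) (hW : A ∘L W = (adjoint U) ∘L A) (x : H)
    (hx : x ∈ closure (Set.range (⇑A))) (h1 : ‖B x‖ = 1) :
    ‖B (U x)‖ ≤ aOpNorm A U := by
  apply le_csSup (bddAboveSet A B U W hA' hB hBA hW)
  exact ⟨x, hx, by rw [aNorm_eq A B hB hBA]; exact h1, (aNorm_eq A B hB hBA _).symm⟩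

end Part2

section Part3
variable {H : Type*} [NormedAddCommGroup H] [InnerProductSpace ℂ H] [CompleteSpace H]

lemma L2 (A B U W : H →L[ℂ] H) (hA' : adjoint A = A) (hB : IsSelfAdjoint B)
    (hBA : B ∘L B = A) (hW : A ∘L W = (adjoint U) ∘L A) (y : H) :
    ‖B (U y)‖ ≤ aOpNorm A U * ‖B y‖ := by
  classical
  set K : Submodule ℂ H := (LinearMap.range (A : H →ₗ[ℂ] H)).topologicalClosure with hK
  have hKset : (K : Set H) = closure (Set.range (⇑A)) := by
    rw [hK, Submodule.topologicalClosure_coe]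
    congr 1

  haveI : CompleteSpace K :=
    (Submodule.isClosed_topologicalClosure _).completeSpace_coe
  set p : H := (K.orthogonalProjectionOnto y : H) with hp
  have hpK : p ∈ K := (K.orthogonalProjectionOnto y).2
  have hzperp : y - p ∈ Kᗮ := K.sub_starProjection_mem_orthogonal y
  set z : H := y - p with hz
  have hBz : B z = 0 := by
    have hAz : A z ∈ K := by
      apply Submodule.le_topologicalClosure
      exact LinearMap.mem_range_self _ z
    have h0 : ⟪A z, z⟫_ℂ = 0 := (Submodule.mem_orthogonal K z).mp hzperp (A z) hAz
    have h1 : ‖B z‖ ^ 2 = 0 := by rw [← normB_sq A B hB hBA, h0]; simp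
    exact norm_eq_zero.mp (pow_eq_zero_iff (n := 2) (by norm_num) |>.mp h1)
  have hBy : B y = B p := by
    have h2 : B y - B p = 0 := by rw [← map_sub, ← hz, hBz]
    exact sub_eq_zero.mp h2
  have hUy : U y = U p + U z := by rw [hz, ← map_add]; congr 1; abel
  have hBUz : ‖B (U z)‖ = 0 := by
    have h1 := L1sq A B U W hB hBA hW z
    rw [hBz] at h1
    simp only [norm_zero, mul_zero] at h1
    nlinarith [norm_nonneg (B (U z))]
  have hsplit : ‖B (U y)‖ ≤ ‖B (U p)‖ := by
    calc ‖B (U y)‖ = ‖B (U p) + B (U z)‖ := by rw [hUy, map_add]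
    _ ≤ ‖B (U p)‖ + ‖B (U z)‖ := norm_add_le _ _
    _ = ‖B (U p)‖ := by rw [hBUz, add_zero]
  by_cases hp0 : ‖B p‖ = 0
  · have hBUp : ‖B (U p)‖ = 0 := by
      have h1 := L1sq A B U W hB hBA hW p
      rw [hp0, mul_zero] at h1
      nlinarith [norm_nonneg (B (U p))]
    rw [hBy, hp0, mul_zero]
    rw [hBUp] at hsplit
    exact hsplit
  · have hppos : 0 < ‖B p‖ := lt_of_le_of_ne (norm_nonneg _) (Ne.symm hp0)
    set c : ℂ := ((‖B p‖⁻¹ : ℝ) : ℂ) with hc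
    set x : H := c • p with hx
    have hxK : x ∈ closure (Set.range (⇑A)) := by
      rw [← hKset]
      exact K.smul_mem c hpK
    have hxn : ‖B x‖ = 1 := by
      rw [hx, map_smul, norm_smul, hc]
      simp [abs_of_pos (inv_pos.mpr hppos), inv_mul_cancel₀ hp0]
    have hle := le_aOpNorm A B U W hA' hB hBA hW x hxK hxn
    have hUx : ‖B (U x)‖ = ‖B p‖⁻¹ * ‖B (U p)‖ := by
      rw [hx, map_smul, map_smul, norm_smul, hc]
      simp [abs_of_pos (inv_pos.mpr hppos)]
    rw [hUx] at hle
    rw [hBy]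
    calc ‖B (U y)‖ ≤ ‖B (U p)‖ := hsplit
    _ = ‖B p‖ * (‖B p‖⁻¹ * ‖B (U p)‖) := by field_simp
    _ ≤ ‖B p‖ * aOpNorm A U := mul_le_mul_of_nonneg_left hle (norm_nonneg _)
    _ = aOpNorm A U * ‖B p‖ := mul_comm _ _

lemma aOpNorm_adj_le (A B U W : H →L[ℂ] H) (hA' : adjoint A = A) (hB : IsSelfAdjoint B)
    (hBA : B ∘L B = A) (hW : A ∘L W = (adjoint U) ∘L A) :
    aOpNorm A W ≤ aOpNorm A U := by
  apply aOpNorm_le A W (aOpNorm_nonneg A U)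
  intro x hx h1
  rw [aNorm_eq A B hB hBA] at h1 ⊢
  have hsq : ‖B (W x)‖ ^ 2 ≤ aOpNorm A U * ‖B (W x)‖ := by
    have e1 : (‖B (W x)‖ : ℝ) ^ 2 = (⟪A (W x), W x⟫_ℂ).re := (normB_sq A B hB hBA _).symm
    have e2 : ⟪A (W x), W x⟫_ℂ = ⟪B x, B (U (W x))⟫_ℂ := by
      have hax : A (W x) = (adjoint U) (A x) := by
        have := DFunLike.congr_fun hW x
        simpa using this
      rw [hax, adjoint_inner_left, innerA_eq A B hB hBA]
    have e3 : (⟪B x, B (U (W x))⟫_ℂ).re ≤ ‖B x‖ * ‖B (U (W x))‖ :=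
      le_trans (Complex.re_le_norm _)
        (by exact norm_inner_le_norm _ _)
    have e4 : ‖B (U (W x))‖ ≤ aOpNorm A U * ‖B (W x)‖ :=
      L2 A B U W hA' hB hBA hW (W x)
    calc ‖B (W x)‖ ^ 2 = (⟪B x, B (U (W x))⟫_ℂ).re := by rw [e1, e2]
    _ ≤ ‖B x‖ * ‖B (U (W x))‖ := e3
    _ = ‖B (U (W x))‖ := by rw [h1, one_mul]
    _ ≤ aOpNorm A U * ‖B (W x)‖ := e4
  rcases eq_or_lt_of_le (norm_nonneg (B (W x))) with h0 | h0
  · rw [← h0]; exact aOpNorm_nonneg A U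
  · nlinarith

end Part3

set_option maxHeartbeats 1000000 in
theorem stmt11 (A T1 T2 S1 S2 : H →L[ℂ] H) (hA : A.IsPositive)
    (hS1 : A ∘L S1 = (ContinuousLinearMap.adjoint T1) ∘L A)
    (hS1r : Set.range (⇑S1) ⊆ closure (Set.range (⇑A)))
    (hS2 : A ∘L S2 = (ContinuousLinearMap.adjoint T2) ∘L A)
    (hS2r : Set.range (⇑S2) ⊆ closure (Set.range (⇑A))) :
    min ((aOpNorm A (T1 + T2)) ^ 2) ((aOpNorm A (T1 - T2)) ^ 2) ≥
      max (aOpNorm A (T1 ∘L T1 + T2 ∘L T2))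
          (max (aOpNorm A (S1 ∘L T1 + S2 ∘L T2)) (aOpNorm A (T1 ∘L S1 + T2 ∘L S2))) -
        |(aOpNorm A (T1 + T2)) ^ 2 - (aOpNorm A (T1 - T2)) ^ 2| / 2 := by
  obtain ⟨B, hB, hBA⟩ : ∃ B : H →L[ℂ] H, IsSelfAdjoint B ∧ B ∘L B = A := by
    have h0 : (0 : H →L[ℂ] H) ≤ A := (ContinuousLinearMap.nonneg_iff_isPositive A).mpr hA
    refine ⟨CFC.sqrt A, IsSelfAdjoint.of_nonneg (CFC.sqrt_nonneg A), ?_⟩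
    have h2 := CFC.sq_sqrt A h0
    rw [pow_two] at h2
    exact h2
  have hA' : adjoint A = A := hA.isSelfAdjoint.adjoint_eq
  set Up := T1 + T2 with hUp
  set Um := T1 - T2 with hUm
  set Wp := S1 + S2 with hWp
  set Wm := S1 - S2 with hWm
  have hWp' : A ∘L Wp = (adjoint Up) ∘L A := by
    rw [hWp, hUp, comp_add, hS1, hS2, map_add, add_comp]
  have hWm' : A ∘L Wm = (adjoint Um) ∘L A := by
    rw [hWm, hUm, comp_sub, hS1, hS2, map_sub, sub_comp]
  have hUp' : A ∘L Up = (adjoint Wp) ∘L A := flipAdj A Up Wp hA' hWp'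
  have hUm' : A ∘L Um = (adjoint Wm) ∘L A := flipAdj A Um Wm hA' hWm'
  set a := aOpNorm A Up with haa
  set b := aOpNorm A Um with hbb
  have ha0 : 0 ≤ a := aOpNorm_nonneg A Up
  have hb0 : 0 ≤ b := aOpNorm_nonneg A Um
  have hUppt : ∀ y, ‖B (Up y)‖ ≤ a * ‖B y‖ := L2 A B Up Wp hA' hB hBA hWp'
  have hUmpt : ∀ y, ‖B (Um y)‖ ≤ b * ‖B y‖ := L2 A B Um Wm hA' hB hBA hWm'
  have hWppt : ∀ y, ‖B (Wp y)‖ ≤ aOpNorm A Wp * ‖B y‖ := L2 A B Wp Up hA' hB hBA hUp'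
  have hWmpt : ∀ y, ‖B (Wm y)‖ ≤ aOpNorm A Wm * ‖B y‖ := L2 A B Wm Um hA' hB hBA hUm'
  have hWple : aOpNorm A Wp ≤ a := aOpNorm_adj_le A B Up Wp hA' hB hBA hWp'
  have hWmle : aOpNorm A Wm ≤ b := aOpNorm_adj_le A B Um Wm hA' hB hBA hWm'
  have hWp0 : 0 ≤ aOpNorm A Wp := aOpNorm_nonneg A Wp
  have hWm0 : 0 ≤ aOpNorm A Wm := aOpNorm_nonneg A Wm
  have hc0 : (0 : ℝ) ≤ (a ^ 2 + b ^ 2) / 2 := by positivity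
  -- first bound
  have hm1 : aOpNorm A (T1 ∘L T1 + T2 ∘L T2) ≤ (a ^ 2 + b ^ 2) / 2 := by
    apply aOpNorm_le A _ hc0
    intro x hx h1
    rw [aNorm_eq A B hB hBA] at h1 ⊢
    have hid : Up (Up x) + Um (Um x) =
        (T1 ∘L T1 + T2 ∘L T2) x + (T1 ∘L T1 + T2 ∘L T2) x := by
      simp only [hUp, hUm, ContinuousLinearMap.add_apply, ContinuousLinearMap.sub_apply,
        comp_apply, map_add, map_sub]
      abel
    have h2 : 2 * ‖B ((T1 ∘L T1 + T2 ∘L T2) x)‖ ≤ a ^ 2 + b ^ 2 := by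
      have e1 : (2 : ℝ) * ‖B ((T1 ∘L T1 + T2 ∘L T2) x)‖ =
          ‖B (Up (Up x)) + B (Um (Um x))‖ := by
        rw [← map_add, hid, map_add, ← two_smul ℝ, norm_smul]
        simp
      rw [e1]
      calc ‖B (Up (Up x)) + B (Um (Um x))‖ ≤ ‖B (Up (Up x))‖ + ‖B (Um (Um x))‖ :=
            norm_add_le _ _
      _ ≤ a * ‖B (Up x)‖ + b * ‖B (Um x)‖ := add_le_add (hUppt _) (hUmpt _)
      _ ≤ a * (a * ‖B x‖) + b * (b * ‖B x‖) :=
            add_le_add (mul_le_mul_of_nonneg_left (hUppt _) ha0)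
              (mul_le_mul_of_nonneg_left (hUmpt _) hb0)
      _ = a ^ 2 + b ^ 2 := by rw [h1]; ring
    linarith
  -- second bound
  have hm2 : aOpNorm A (S1 ∘L T1 + S2 ∘L T2) ≤ (a ^ 2 + b ^ 2) / 2 := by
    apply aOpNorm_le A _ hc0
    intro x hx h1
    rw [aNorm_eq A B hB hBA] at h1 ⊢
    have hid : Wp (Up x) + Wm (Um x) =
        (S1 ∘L T1 + S2 ∘L T2) x + (S1 ∘L T1 + S2 ∘L T2) x := by
      simp only [hUp, hUm, hWp, hWm, ContinuousLinearMap.add_apply,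
        ContinuousLinearMap.sub_apply, comp_apply, map_add, map_sub]
      abel
    have h2 : 2 * ‖B ((S1 ∘L T1 + S2 ∘L T2) x)‖ ≤ a ^ 2 + b ^ 2 := by
      have e1 : (2 : ℝ) * ‖B ((S1 ∘L T1 + S2 ∘L T2) x)‖ =
          ‖B (Wp (Up x)) + B (Wm (Um x))‖ := by
        rw [← map_add, hid, map_add, ← two_smul ℝ, norm_smul]
        simp
      rw [e1]
      calc ‖B (Wp (Up x)) + B (Wm (Um x))‖ ≤ ‖B (Wp (Up x))‖ + ‖B (Wm (Um x))‖ :=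
            norm_add_le _ _
      _ ≤ aOpNorm A Wp * ‖B (Up x)‖ + aOpNorm A Wm * ‖B (Um x)‖ :=
            add_le_add (hWppt _) (hWmpt _)
      _ ≤ a * ‖B (Up x)‖ + b * ‖B (Um x)‖ :=
            add_le_add (mul_le_mul_of_nonneg_right hWple (norm_nonneg _))
              (mul_le_mul_of_nonneg_right hWmle (norm_nonneg _))
      _ ≤ a * (a * ‖B x‖) + b * (b * ‖B x‖) :=
            add_le_add (mul_le_mul_of_nonneg_left (hUppt _) ha0)
              (mul_le_mul_of_nonneg_left (hUmpt _) hb0)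
      _ = a ^ 2 + b ^ 2 := by rw [h1]; ring
    linarith
  -- third bound
  have hm3 : aOpNorm A (T1 ∘L S1 + T2 ∘L S2) ≤ (a ^ 2 + b ^ 2) / 2 := by
    apply aOpNorm_le A _ hc0
    intro x hx h1
    rw [aNorm_eq A B hB hBA] at h1 ⊢
    have hid : Up (Wp x) + Um (Wm x) =
        (T1 ∘L S1 + T2 ∘L S2) x + (T1 ∘L S1 + T2 ∘L S2) x := by
      simp only [hUp, hUm, hWp, hWm, ContinuousLinearMap.add_apply,
        ContinuousLinearMap.sub_apply, comp_apply, map_add, map_sub]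
      abel
    have h2 : 2 * ‖B ((T1 ∘L S1 + T2 ∘L S2) x)‖ ≤ a ^ 2 + b ^ 2 := by
      have e1 : (2 : ℝ) * ‖B ((T1 ∘L S1 + T2 ∘L S2) x)‖ =
          ‖B (Up (Wp x)) + B (Um (Wm x))‖ := by
        rw [← map_add, hid, map_add, ← two_smul ℝ, norm_smul]
        simp
      rw [e1]
      calc ‖B (Up (Wp x)) + B (Um (Wm x))‖ ≤ ‖B (Up (Wp x))‖ + ‖B (Um (Wm x))‖ :=
            norm_add_le _ _
      _ ≤ a * ‖B (Wp x)‖ + b * ‖B (Wm x)‖ := add_le_add (hUppt _) (hUmpt _)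
      _ ≤ a * (aOpNorm A Wp * ‖B x‖) + b * (aOpNorm A Wm * ‖B x‖) :=
            add_le_add (mul_le_mul_of_nonneg_left (hWppt _) ha0)
              (mul_le_mul_of_nonneg_left (hWmpt _) hb0)
      _ ≤ a * (a * ‖B x‖) + b * (b * ‖B x‖) := by
            rw [h1]
            exact add_le_add (mul_le_mul_of_nonneg_left (by simpa using hWple) ha0)
              (mul_le_mul_of_nonneg_left (by simpa using hWmle) hb0)
      _ = a ^ 2 + b ^ 2 := by rw [h1]; ring
    linarith
  have hmax : max (aOpNorm A (T1 ∘L T1 + T2 ∘L T2))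
      (max (aOpNorm A (S1 ∘L T1 + S2 ∘L T2)) (aOpNorm A (T1 ∘L S1 + T2 ∘L S2)))
      ≤ (a ^ 2 + b ^ 2) / 2 := max_le hm1 (max_le hm2 hm3)
  rcases le_total (a ^ 2) (b ^ 2) with h | h
  · have e1 : min (a ^ 2) (b ^ 2) = a ^ 2 := min_eq_left h
    have e2 : |a ^ 2 - b ^ 2| = -(a ^ 2 - b ^ 2) := abs_of_nonpos (sub_nonpos.mpr h)
    rw [e1, e2]
    linarith
  · have e1 : min (a ^ 2) (b ^ 2) = b ^ 2 := min_eq_right h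
    have e2 : |a ^ 2 - b ^ 2| = a ^ 2 - b ^ 2 := abs_of_nonneg (sub_nonneg.mpr h)
    rw [e1, e2]
    linarith
end

section
/- Let T1, T2, T3, T4 be bounded linear operators on H each admitting an A-adjoint S_i = T_i^{#_A} (i.e. A∘S_i = T_i*∘A and range(S_i) ⊆ closure(range A)). Then w_B([[T1,T2],[T3,T4]]) ≤ min(α, β), where α = ((‖T1+T2‖_A² + ‖T1-T2‖_A²)/2)^{1/2} + ((‖T4+T3‖_A² + ‖T4-T3‖_A²)/2)^{1/2} and β = ((‖T1+T3‖_A² + ‖T1-T3‖_A²)/2)^{1/2} + ((‖T2+T4‖_A² + ‖T2-T4‖_A²)/2)^{1/2}. -/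
open scoped InnerProductSpace
open ContinuousLinearMap

variable {H : Type*} [NormedAddCommGroup H] [InnerProductSpace ℂ H] [CompleteSpace H]

namespace Stmt12Aux

/-! ### Numeric lemmas -/

lemma twoCS (a b p q : ℝ) : a*p + b*q ≤ Real.sqrt (a^2+b^2) * Real.sqrt (p^2+q^2) := by
  rw [← Real.sqrt_mul (by positivity)]
  calc a*p+b*q ≤ |a*p+b*q| := le_abs_self _
    _ = Real.sqrt ((a*p+b*q)^2) := (Real.sqrt_sq_eq_abs _).symm
    _ ≤ Real.sqrt ((a^2+b^2)*(p^2+q^2)) :=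
        Real.sqrt_le_sqrt (by nlinarith [sq_nonneg (a*q-b*p)])

lemma moment_le (f : ℕ → ℝ) (hf : ∀ n, 0 ≤ f n) (hf0 : f 0 = 1)
    (hconv : ∀ n, f (n+1)^2 ≤ f n * f (n+2)) (M c : ℝ) (hc : 0 ≤ c)
    (hgrow : ∀ n, f n ≤ M * c^n) : f 1 ≤ c := by
  have hQ : ∀ n, f 1 * f n ≤ f (n+1) := by
    intro n
    induction n with
    | zero => simp [hf0]
    | succ n ih =>
      rcases eq_or_lt_of_le (hf (n+1)) with h0 | h0
      · rw [← h0]; simpa using hf (n+2)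
      · have hfn : 0 < f n := by
          rcases eq_or_lt_of_le (hf n) with h1 | h1
          · exfalso; have h2 := hconv n; rw [← h1] at h2; nlinarith
          · exact h1
        nlinarith [hconv n, mul_le_mul_of_nonneg_right ih (le_of_lt h0)]
  have hpow : ∀ n, f 1 ^ n ≤ f n := by
    intro n
    induction n with
    | zero => simp [hf0]
    | succ n ih =>
      calc f 1 ^ (n+1) = f 1 * f 1 ^ n := by ring
        _ ≤ f 1 * f n := mul_le_mul_of_nonneg_left ih (hf 1)
        _ ≤ f (n+1) := hQ n
  by_contra hlt
  push_neg at hlt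
  have h1pos : 0 < f 1 := lt_of_le_of_lt hc hlt
  rcases eq_or_lt_of_le hc with hc0 | hc0
  · have h2 := (hpow 1).trans (hgrow 1)
    rw [← hc0] at h2
    simp at h2
    linarith
  · have hone : 1 < f 1 / c := (one_lt_div hc0).mpr hlt
    obtain ⟨n, hn⟩ := pow_unbounded_of_one_lt M hone
    have h2 : f 1 ^ n ≤ M * c ^ n := (hpow n).trans (hgrow n)
    have h3 : (f 1 / c) ^ n ≤ M := by
      rw [div_pow, div_le_iff₀ (by positivity)]
      linarith
    linarith

lemma numeric (a b c d p q nx ny : ℝ)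
    (hnx : 0 ≤ nx) (hny : 0 ≤ ny)
    (hpq : p^2 + q^2 = 2) (hn : nx^2 + ny^2 = 1) :
    (a*p*nx + b*q*nx)/2 + (c*p*ny + d*q*ny)/2 ≤
      Real.sqrt ((a^2+b^2)/2) + Real.sqrt ((c^2+d^2)/2) := by
  have hx1 : nx ≤ 1 := by nlinarith
  have hy1 : ny ≤ 1 := by nlinarith
  have h1 : a*p + b*q ≤ Real.sqrt (a^2+b^2) * Real.sqrt 2 := by
    have := twoCS a b p q; rwa [hpq] at this
  have h2 : c*p + d*q ≤ Real.sqrt (c^2+d^2) * Real.sqrt 2 := by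
    have := twoCS c d p q; rwa [hpq] at this
  have key : ∀ s : ℝ, 0 ≤ s → Real.sqrt s * Real.sqrt 2 = 2 * Real.sqrt (s/2) := by
    intro s hs
    rw [show Real.sqrt (s/2) = Real.sqrt s / Real.sqrt 2 from Real.sqrt_div hs 2]
    have h2' : (0:ℝ) < Real.sqrt 2 := Real.sqrt_pos.mpr (by norm_num)
    field_simp
    nlinarith [Real.sq_sqrt (show (0:ℝ) ≤ 2 by norm_num), Real.sqrt_nonneg s]
  have k1 := key (a^2+b^2) (by positivity)
  have k2 := key (c^2+d^2) (by positivity)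
  have s1 := Real.sqrt_nonneg ((a^2+b^2)/2)
  have s2 := Real.sqrt_nonneg ((c^2+d^2)/2)
  nlinarith [mul_le_mul_of_nonneg_right h1 hnx, mul_le_mul_of_nonneg_right h2 hny,
    mul_le_mul_of_nonneg_left hx1 (mul_nonneg (by norm_num : (0:ℝ) ≤ 2) s1),
    mul_le_mul_of_nonneg_left hy1 (mul_nonneg (by norm_num : (0:ℝ) ≤ 2) s2)]

/-! ### Operator lemmas -/

lemma exists_sqrt (A : H →L[ℂ] H) (hA : A.IsPositive) :
    ∃ R : H →L[ℂ] H, ContinuousLinearMap.adjoint R = R ∧ R ∘L R = A := by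
  have h0 : (0:H→L[ℂ]H) ≤ A := (ContinuousLinearMap.nonneg_iff_isPositive A).mpr hA
  refine ⟨CFC.sqrt A, ?_, CFC.sqrt_mul_sqrt_self A h0⟩
  have := ((ContinuousLinearMap.nonneg_iff_isPositive (CFC.sqrt A)).mp (CFC.sqrt_nonneg A)).isSelfAdjoint
  rw [← ContinuousLinearMap.star_eq_adjoint]
  exact this

variable {A R : H →L[ℂ] H}

lemma Rsym (hRsa : ContinuousLinearMap.adjoint R = R) (u v : H) :
    ⟪R u, v⟫_ℂ = ⟪u, R v⟫_ℂ := by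
  have := ContinuousLinearMap.adjoint_inner_left R v u
  rwa [hRsa] at this

lemma innR (hRsa : ContinuousLinearMap.adjoint R = R) (hRA : R ∘L R = A) (x y : H) :
    ⟪A x, y⟫_ℂ = ⟪R x, R y⟫_ℂ := by
  have hx : A x = R (R x) := by rw [← hRA]; rfl
  rw [hx, Rsym hRsa]

lemma Asym (hRsa : ContinuousLinearMap.adjoint R = R) (hRA : R ∘L R = A) (u v : H) :
    ⟪A u, v⟫_ℂ = ⟪u, A v⟫_ℂ := by
  rw [innR hRsa hRA u v, Rsym hRsa u (R v)]
  congr 1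
  rw [← hRA]; rfl

lemma re_inner_self (hRsa : ContinuousLinearMap.adjoint R = R) (hRA : R ∘L R = A) (x : H) :
    (⟪A x, x⟫_ℂ).re = ‖R x‖ ^ 2 := by
  rw [innR hRsa hRA]
  simpa using inner_self_eq_norm_sq (𝕜 := ℂ) (R x)

lemma aNorm_eq (hRsa : ContinuousLinearMap.adjoint R = R) (hRA : R ∘L R = A) (x : H) :
    aNorm A x = ‖R x‖ := by
  rw [aNorm, re_inner_self hRsa hRA, Real.sqrt_sq (norm_nonneg _)]

lemma swapA (hRsa : ContinuousLinearMap.adjoint R = R) (hRA : R ∘L R = A)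
    {T S : H →L[ℂ] H} (hS : A ∘L S = ContinuousLinearMap.adjoint T ∘L A) (u v : H) :
    ⟪A (T u), v⟫_ℂ = ⟪A u, S v⟫_ℂ := by
  have hASv : A (S v) = ContinuousLinearMap.adjoint T (A v) := by
    have := congrArg (fun f : H →L[ℂ] H => f v) hS
    simpa using this
  calc ⟪A (T u), v⟫_ℂ = ⟪T u, A v⟫_ℂ := Asym hRsa hRA _ _
    _ = ⟪u, ContinuousLinearMap.adjoint T (A v)⟫_ℂ :=
        (ContinuousLinearMap.adjoint_inner_right T u (A v)).symm
    _ = ⟪u, A (S v)⟫_ℂ := by rw [hASv]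
    _ = ⟪A u, S v⟫_ℂ := (Asym hRsa hRA _ _).symm

lemma swapV (hRsa : ContinuousLinearMap.adjoint R = R) (hRA : R ∘L R = A)
    {T S : H →L[ℂ] H} (hS : A ∘L S = ContinuousLinearMap.adjoint T ∘L A) (u v : H) :
    ⟪A ((S ∘L T) u), v⟫_ℂ = ⟪A u, (S ∘L T) v⟫_ℂ := by
  have hASw : ∀ w, A (S w) = ContinuousLinearMap.adjoint T (A w) := by
    intro w
    have := congrArg (fun f : H →L[ℂ] H => f w) hS
    simpa using this
  calc ⟪A (S (T u)), v⟫_ℂ = ⟪ContinuousLinearMap.adjoint T (A (T u)), v⟫_ℂ := by rw [hASw]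
    _ = ⟪A (T u), T v⟫_ℂ := ContinuousLinearMap.adjoint_inner_left T v (A (T u))
    _ = ⟪A u, S (T v)⟫_ℂ := swapA hRsa hRA hS _ _

lemma ptBase (hRsa : ContinuousLinearMap.adjoint R = R) (hRA : R ∘L R = A)
    {T S : H →L[ℂ] H} (hS : A ∘L S = ContinuousLinearMap.adjoint T ∘L A) (w : H) :
    ‖R (T w)‖ ^ 2 ≤ ‖R w‖ * ‖R ((S ∘L T) w)‖ := by
  have h1 : (‖R (T w)‖:ℝ) ^ 2 = (⟪A (T w), T w⟫_ℂ).re := (re_inner_self hRsa hRA _).symm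
  rw [h1, swapA hRsa hRA hS]
  calc (⟪A w, S (T w)⟫_ℂ).re ≤ ‖⟪A w, S (T w)⟫_ℂ‖ := by
        simpa using RCLike.re_le_norm (⟪A w, S (T w)⟫_ℂ)
    _ = ‖⟪R w, R (S (T w))⟫_ℂ‖ := by rw [innR hRsa hRA]
    _ ≤ ‖R w‖ * ‖R (S (T w))‖ := norm_inner_le_norm _ _
    _ = ‖R w‖ * ‖R ((S ∘L T) w)‖ := rfl

lemma ptBound_unit (hRsa : ContinuousLinearMap.adjoint R = R) (hRA : R ∘L R = A)
    {T S : H →L[ℂ] H} (hS : A ∘L S = ContinuousLinearMap.adjoint T ∘L A)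
    (u : H) (hu : ‖R u‖ = 1) : ‖R (T u)‖ ^ 2 ≤ ‖S ∘L T‖ := by
  set V := S ∘L T with hV
  set f : ℕ → ℝ := fun n => ‖R ((V ^ n) u)‖ with hfdef
  have hVpow : ∀ n : ℕ, (V ^ (n+1)) u = V ((V ^ n) u) := by
    intro n
    rw [pow_succ']
    rfl
  have hf : ∀ n, 0 ≤ f n := fun n => norm_nonneg _
  have hf0 : f 0 = 1 := by simpa [hfdef] using hu
  have hconv : ∀ n, f (n+1) ^ 2 ≤ f n * f (n+2) := by
    intro n
    have e1 : f (n+1) ^ 2 = (⟪A (V ((V ^ n) u)), V ((V ^ n) u)⟫_ℂ).re := by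
      rw [hfdef]
      simp only [hVpow n]
      exact (re_inner_self hRsa hRA _).symm
    rw [e1, swapV hRsa hRA hS]
    have e2 : V (V ((V ^ n) u)) = (V ^ (n+2)) u := by
      rw [hVpow (n+1), hVpow n]
    calc (⟪A ((V ^ n) u), V (V ((V ^ n) u))⟫_ℂ).re
        ≤ ‖⟪A ((V ^ n) u), V (V ((V ^ n) u))⟫_ℂ‖ := by
          simpa using RCLike.re_le_norm (⟪A ((V ^ n) u), V (V ((V ^ n) u))⟫_ℂ)
      _ = ‖⟪R ((V ^ n) u), R (V (V ((V ^ n) u)))⟫_ℂ‖ := by rw [innR hRsa hRA]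
      _ ≤ ‖R ((V ^ n) u)‖ * ‖R (V (V ((V ^ n) u)))‖ := norm_inner_le_norm _ _
      _ = f n * f (n+2) := by rw [hfdef]; simp only [e2]
  have hVn : ∀ n : ℕ, ‖(V ^ n) u‖ ≤ ‖V‖ ^ n * ‖u‖ := by
    intro n
    induction n with
    | zero => simp
    | succ n ih =>
      rw [hVpow n, pow_succ]
      calc ‖V ((V ^ n) u)‖ ≤ ‖V‖ * ‖(V ^ n) u‖ := V.le_opNorm _
        _ ≤ ‖V‖ * (‖V‖ ^ n * ‖u‖) := mul_le_mul_of_nonneg_left ih (norm_nonneg V)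
        _ = ‖V‖ ^ n * ‖V‖ * ‖u‖ := by ring
  have hgrow : ∀ n, f n ≤ (‖R‖ * ‖u‖) * ‖V‖ ^ n := by
    intro n
    calc f n ≤ ‖R‖ * ‖(V ^ n) u‖ := R.le_opNorm _
      _ ≤ ‖R‖ * (‖V‖ ^ n * ‖u‖) := mul_le_mul_of_nonneg_left (hVn n) (norm_nonneg R)
      _ = (‖R‖ * ‖u‖) * ‖V‖ ^ n := by ring
  have hf1 : f 1 ≤ ‖V‖ :=
    moment_le f hf hf0 hconv (‖R‖ * ‖u‖) ‖V‖ (norm_nonneg V) hgrow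
  have hb := ptBase hRsa hRA hS u
  have hfV : ‖R (V u)‖ = f 1 := by rw [hfdef]; simp
  calc ‖R (T u)‖ ^ 2 ≤ ‖R u‖ * ‖R ((V) u)‖ := hb
    _ = f 1 := by rw [hu, hfV, one_mul]
    _ ≤ ‖V‖ := hf1

lemma ptBound (hRsa : ContinuousLinearMap.adjoint R = R) (hRA : R ∘L R = A)
    {T S : H →L[ℂ] H} (hS : A ∘L S = ContinuousLinearMap.adjoint T ∘L A) (x : H) :
    ‖R (T x)‖ ^ 2 ≤ ‖S ∘L T‖ * ‖R x‖ ^ 2 := by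
  rcases eq_or_lt_of_le (norm_nonneg (R x)) with h0 | h0
  · have hb := ptBase hRsa hRA hS x
    rw [← h0] at hb ⊢
    simp only [zero_mul, mul_zero] at hb
    calc ‖R (T x)‖ ^ 2 ≤ 0 := hb
      _ = ‖S ∘L T‖ * 0 ^ 2 := by ring
  · set t : ℝ := ‖R x‖ with ht
    have htne : (t:ℂ) ≠ 0 := by
      simp only [ne_eq, Complex.ofReal_eq_zero]
      exact ne_of_gt h0
    set u : H := ((t:ℂ))⁻¹ • x with hudef
    have hRu : R u = ((t:ℂ))⁻¹ • R x := by rw [hudef, map_smul]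
    have hnc : ‖((t:ℂ))⁻¹‖ = t⁻¹ := by
      rw [norm_inv]
      simp [abs_of_pos h0]
    have hu1 : ‖R u‖ = 1 := by
      rw [hRu, norm_smul, hnc, ← ht, inv_mul_cancel₀ (ne_of_gt h0)]
    have hmain := ptBound_unit hRsa hRA hS u hu1
    have hx : x = (t:ℂ) • u := by
      rw [hudef, smul_smul, mul_inv_cancel₀ htne, one_smul]
    have hTx : ‖R (T x)‖ = t * ‖R (T u)‖ := by
      conv_lhs => rw [hx]
      rw [map_smul, map_smul, norm_smul]
      simp [abs_of_pos h0]
    calc ‖R (T x)‖ ^ 2 = t^2 * ‖R (T u)‖ ^ 2 := by rw [hTx]; ring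
      _ ≤ t^2 * ‖S ∘L T‖ := mul_le_mul_of_nonneg_left hmain (sq_nonneg t)
      _ = ‖S ∘L T‖ * ‖R x‖ ^ 2 := by rw [ht]; ring

lemma opSet_bdd (hRsa : ContinuousLinearMap.adjoint R = R) (hRA : R ∘L R = A)
    {T S : H →L[ℂ] H} (hS : A ∘L S = ContinuousLinearMap.adjoint T ∘L A) :
    Real.sqrt ‖S ∘L T‖ ∈ upperBounds
      {r : ℝ | ∃ x : H, x ∈ closure (Set.range (⇑A)) ∧ aNorm A x = 1 ∧ r = aNorm A (T x)} := by
  rintro r ⟨x, _, hx1, rfl⟩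
  rw [aNorm_eq hRsa hRA] at hx1 ⊢
  have h := ptBound hRsa hRA hS x
  rw [hx1] at h
  simp only [one_pow, mul_one] at h
  rw [← Real.sqrt_sq (norm_nonneg (R (T x)))]
  exact Real.sqrt_le_sqrt h

lemma aNormT_le (hRsa : ContinuousLinearMap.adjoint R = R) (hRA : R ∘L R = A)
    {T S : H →L[ℂ] H} (hS : A ∘L S = ContinuousLinearMap.adjoint T ∘L A)
    {z : H} (hz : z ∈ closure (Set.range (⇑A))) :
    ‖R (T z)‖ ≤ aOpNorm A T * ‖R z‖ := by
  rcases eq_or_lt_of_le (norm_nonneg (R z)) with h0 | h0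
  · have h := ptBound hRsa hRA hS z
    rw [← h0] at h ⊢
    have h1 : ‖R (T z)‖ = 0 := by nlinarith [norm_nonneg (R (T z))]
    rw [h1, mul_zero]
  · set t : ℝ := ‖R z‖ with ht
    have htne : (t:ℂ) ≠ 0 := by
      simp only [ne_eq, Complex.ofReal_eq_zero]
      exact ne_of_gt h0
    set u : H := ((t:ℂ))⁻¹ • z with hudef
    have humem : u ∈ closure (Set.range (⇑A)) := by
      have hcont : Continuous fun w : H => ((t:ℂ))⁻¹ • w := continuous_const_smul _
      have himg : (fun w : H => ((t:ℂ))⁻¹ • w) '' Set.range (⇑A) ⊆ Set.range (⇑A) := by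
        rintro _ ⟨_, ⟨v, rfl⟩, rfl⟩
        exact ⟨((t:ℂ))⁻¹ • v, by rw [map_smul]⟩
      have hsub := image_closure_subset_closure_image (s := Set.range (⇑A)) hcont
      have hu' : u ∈ (fun w : H => ((t:ℂ))⁻¹ • w) '' closure (Set.range (⇑A)) := ⟨z, hz, rfl⟩
      exact closure_mono himg (hsub hu')
    have hRu : R u = ((t:ℂ))⁻¹ • R z := by rw [hudef, map_smul]
    have hnc : ‖((t:ℂ))⁻¹‖ = t⁻¹ := by
      rw [norm_inv]
      simp [abs_of_pos h0]
    have hu1 : ‖R u‖ = 1 := by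
      rw [hRu, norm_smul, hnc, ← ht, inv_mul_cancel₀ (ne_of_gt h0)]
    have hmem : aNorm A (T u) ∈
        {r : ℝ | ∃ x : H, x ∈ closure (Set.range (⇑A)) ∧ aNorm A x = 1 ∧ r = aNorm A (T x)} :=
      ⟨u, humem, by rw [aNorm_eq hRsa hRA]; exact hu1, rfl⟩
    have hle : aNorm A (T u) ≤ aOpNorm A T :=
      le_csSup ⟨Real.sqrt ‖S ∘L T‖, opSet_bdd hRsa hRA hS⟩ hmem
    rw [aNorm_eq hRsa hRA] at hle
    have hz' : z = (t:ℂ) • u := by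
      rw [hudef, smul_smul, mul_inv_cancel₀ htne, one_smul]
    have hTz : ‖R (T z)‖ = t * ‖R (T u)‖ := by
      conv_lhs => rw [hz']
      rw [map_smul, map_smul, norm_smul]
      simp [abs_of_pos h0]
    rw [hTz]
    calc t * ‖R (T u)‖ ≤ t * aOpNorm A T := mul_le_mul_of_nonneg_left hle (le_of_lt h0)
      _ = aOpNorm A T * ‖R z‖ := by rw [ht]; ring

/-! ### The closure of the range as a submodule -/

noncomputable def Fsub (A : H →L[ℂ] H) : Submodule ℂ H :=
  (LinearMap.range (A : H →ₗ[ℂ] H)).topologicalClosure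

lemma Fsub_coe (A : H →L[ℂ] H) : (Fsub A : Set H) = closure (Set.range (⇑A)) := by
  rw [Fsub, Submodule.topologicalClosure_coe]
  congr 1

instance (A : H →L[ℂ] H) : CompleteSpace (Fsub A) :=
  (Submodule.isClosed_topologicalClosure _).completeSpace_coe

lemma mem_Fsub_of_range (A : H →L[ℂ] H) (x : H) : A x ∈ Fsub A :=
  Submodule.le_topologicalClosure _ ⟨x, rfl⟩

lemma R_proj (hRsa : ContinuousLinearMap.adjoint R = R) (hRA : R ∘L R = A) (x : H) :
    R ((Submodule.orthogonalProjection (Fsub A) x : H)) = R x := by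
  set x1 : H := (Submodule.orthogonalProjection (Fsub A) x : H) with hx1
  have hx0 : x - x1 ∈ (Fsub A)ᗮ := Submodule.sub_starProjection_mem_orthogonal x
  have h1 : ⟪A (x - x1), x - x1⟫_ℂ = 0 :=
    (Submodule.mem_orthogonal (Fsub A) (x - x1)).mp hx0 _ (mem_Fsub_of_range A _)
  have h2 : ‖R (x - x1)‖ ^ 2 = 0 := by
    rw [← re_inner_self hRsa hRA, h1]; simp
  have h3 : R (x - x1) = 0 := by
    have h4 : ‖R (x - x1)‖ = 0 := by
      nlinarith [norm_nonneg (R (x - x1))]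
    exact norm_eq_zero.mp h4
  rw [map_sub] at h3
  exact (sub_eq_zero.mp h3).symm

lemma A_proj (hRsa : ContinuousLinearMap.adjoint R = R) (hRA : R ∘L R = A) (x : H) :
    A ((Submodule.orthogonalProjection (Fsub A) x : H)) = A x := by
  have h := R_proj hRsa hRA x
  have e : ∀ w : H, A w = R (R w) := by intro w; rw [← hRA]; rfl
  rw [e, e x, h]

lemma term_proj (hRsa : ContinuousLinearMap.adjoint R = R) (hRA : R ∘L R = A)
    {T S : H →L[ℂ] H} (hS : A ∘L S = ContinuousLinearMap.adjoint T ∘L A)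
    {u v u1 v1 : H} (hau : A u1 = A u) (hrv : R v1 = R v) :
    ⟪A (T u), v⟫_ℂ = ⟪A (T u1), v1⟫_ℂ := by
  calc ⟪A (T u), v⟫_ℂ = ⟪A u, S v⟫_ℂ := swapA hRsa hRA hS u v
    _ = ⟪A u1, S v⟫_ℂ := by rw [hau]
    _ = ⟪A (T u1), v⟫_ℂ := (swapA hRsa hRA hS _ v).symm
    _ = ⟪R (T u1), R v⟫_ℂ := innR hRsa hRA _ _
    _ = ⟪R (T u1), R v1⟫_ℂ := by rw [hrv]
    _ = ⟪A (T u1), v1⟫_ℂ := (innR hRsa hRA _ _).symm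

lemma term_bound (hRsa : ContinuousLinearMap.adjoint R = R) (hRA : R ∘L R = A)
    {T S : H →L[ℂ] H} (hS : A ∘L S = ContinuousLinearMap.adjoint T ∘L A)
    {a : H} (ha : a ∈ Fsub A) (z : H) :
    ‖⟪A (T a), z⟫_ℂ‖ ≤ aOpNorm A T * ‖R a‖ * ‖R z‖ := by
  rw [innR hRsa hRA]
  have h1 : ‖R (T a)‖ ≤ aOpNorm A T * ‖R a‖ :=
    aNormT_le hRsa hRA hS (by rw [← Fsub_coe]; exact ha)
  calc ‖⟪R (T a), R z⟫_ℂ‖ ≤ ‖R (T a)‖ * ‖R z‖ := norm_inner_le_norm _ _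
    _ ≤ aOpNorm A T * ‖R a‖ * ‖R z‖ := mul_le_mul_of_nonneg_right h1 (norm_nonneg _)

lemma bracket_bound (hRsa : ContinuousLinearMap.adjoint R = R) (hRA : R ∘L R = A)
    {U W SU SW : H →L[ℂ] H}
    (hU : A ∘L SU = ContinuousLinearMap.adjoint U ∘L A)
    (hW : A ∘L SW = ContinuousLinearMap.adjoint W ∘L A)
    {a1 a2 : H} (ha1 : a1 ∈ Fsub A) (ha2 : a2 ∈ Fsub A) (z1 z2 : H)
    (w : ℂ) (hw : 2 * w = ⟪A (U a1), z1⟫_ℂ + ⟪A (W a2), z2⟫_ℂ) :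
    ‖w‖ ≤ (aOpNorm A U * ‖R a1‖ * ‖R z1‖ + aOpNorm A W * ‖R a2‖ * ‖R z2‖) / 2 := by
  have h1 := term_bound hRsa hRA hU ha1 z1
  have h2 := term_bound hRsa hRA hW ha2 z2
  have h3 : (2:ℝ) * ‖w‖ = ‖(2:ℂ) * w‖ := by
    rw [norm_mul]
    norm_num
  have h4 : ‖(2:ℂ) * w‖ ≤ ‖⟪A (U a1), z1⟫_ℂ‖ + ‖⟪A (W a2), z2⟫_ℂ‖ := by
    rw [hw]; exact norm_add_le _ _
  linarith

lemma aNorm_neg (A : H →L[ℂ] H) (x : H) : aNorm A (-x) = aNorm A x := by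
  simp [aNorm]

lemma aOpNorm_neg (A T : H →L[ℂ] H) : aOpNorm A (-T) = aOpNorm A T := by
  unfold aOpNorm
  congr 1
  ext r
  simp only [Set.mem_setOf_eq, ContinuousLinearMap.neg_apply]
  constructor
  · rintro ⟨x, h1, h2, rfl⟩
    exact ⟨x, h1, h2, (aNorm_neg A (T x))⟩
  · rintro ⟨x, h1, h2, rfl⟩
    exact ⟨x, h1, h2, (aNorm_neg A (T x)).symm⟩

lemma aOpNorm_nonneg (A T : H →L[ℂ] H) : 0 ≤ aOpNorm A T := by
  apply Real.sSup_nonneg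
  rintro r ⟨x, _, _, rfl⟩
  exact Real.sqrt_nonneg _

lemma adj_add {A T1 T2 S1 S2 : H →L[ℂ] H}
    (h1 : A ∘L S1 = ContinuousLinearMap.adjoint T1 ∘L A)
    (h2 : A ∘L S2 = ContinuousLinearMap.adjoint T2 ∘L A) :
    A ∘L (S1 + S2) = ContinuousLinearMap.adjoint (T1 + T2) ∘L A := by
  have e : ContinuousLinearMap.adjoint (T1 + T2)
      = ContinuousLinearMap.adjoint T1 + ContinuousLinearMap.adjoint T2 := map_add _ T1 T2
  rw [e, ContinuousLinearMap.comp_add, ContinuousLinearMap.add_comp, h1, h2]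

lemma adj_sub {A T1 T2 S1 S2 : H →L[ℂ] H}
    (h1 : A ∘L S1 = ContinuousLinearMap.adjoint T1 ∘L A)
    (h2 : A ∘L S2 = ContinuousLinearMap.adjoint T2 ∘L A) :
    A ∘L (S1 - S2) = ContinuousLinearMap.adjoint (T1 - T2) ∘L A := by
  have e : ContinuousLinearMap.adjoint (T1 - T2)
      = ContinuousLinearMap.adjoint T1 - ContinuousLinearMap.adjoint T2 := map_sub _ T1 T2
  rw [e, ContinuousLinearMap.comp_sub, ContinuousLinearMap.sub_comp, h1, h2]

lemma key_id (A U W : H →L[ℂ] H) (u v : H) :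
    2 * (⟪A (U u), u⟫_ℂ + ⟪A (W v), u⟫_ℂ)
      = ⟪A ((U + W) (u + v)), u⟫_ℂ + ⟪A ((U - W) (u - v)), u⟫_ℂ := by
  simp only [ContinuousLinearMap.add_apply, ContinuousLinearMap.sub_apply, map_add, map_sub,
    inner_add_left, inner_sub_left]
  ring

lemma key_id2 (A U W : H →L[ℂ] H) (u v : H) :
    2 * (⟪A (U u), u⟫_ℂ + ⟪A (W u), v⟫_ℂ)
      = ⟪A ((U + W) u), u + v⟫_ℂ + ⟪A ((U - W) u), u - v⟫_ℂ := by
  simp only [ContinuousLinearMap.add_apply, ContinuousLinearMap.sub_apply, map_add, map_sub,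
    inner_add_left, inner_sub_left, inner_add_right, inner_sub_right]
  ring

end Stmt12Aux

open Stmt12Aux in
theorem stmt12 (A T1 T2 T3 T4 S1 S2 S3 S4 : H →L[ℂ] H) (hA : A.IsPositive)
    (hS1 : A ∘L S1 = (ContinuousLinearMap.adjoint T1) ∘L A)
    (hS1r : Set.range (⇑S1) ⊆ closure (Set.range (⇑A)))
    (hS2 : A ∘L S2 = (ContinuousLinearMap.adjoint T2) ∘L A)
    (hS2r : Set.range (⇑S2) ⊆ closure (Set.range (⇑A)))
    (hS3 : A ∘L S3 = (ContinuousLinearMap.adjoint T3) ∘L A)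
    (hS3r : Set.range (⇑S3) ⊆ closure (Set.range (⇑A)))
    (hS4 : A ∘L S4 = (ContinuousLinearMap.adjoint T4) ∘L A)
    (hS4r : Set.range (⇑S4) ⊆ closure (Set.range (⇑A))) :
    wB A T1 T2 T3 T4 ≤
      min (Real.sqrt (((aOpNorm A (T1 + T2)) ^ 2 + (aOpNorm A (T1 - T2)) ^ 2) / 2) +
           Real.sqrt (((aOpNorm A (T4 + T3)) ^ 2 + (aOpNorm A (T4 - T3)) ^ 2) / 2))
          (Real.sqrt (((aOpNorm A (T1 + T3)) ^ 2 + (aOpNorm A (T1 - T3)) ^ 2) / 2) +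
           Real.sqrt (((aOpNorm A (T2 + T4)) ^ 2 + (aOpNorm A (T2 - T4)) ^ 2) / 2)) := by
  obtain ⟨R, hRsa, hRA⟩ := Stmt12Aux.exists_sqrt A hA
  apply le_min
  · -- α bound
    apply Real.sSup_le _ (by positivity)
    rintro r ⟨x, y, hxy, rfl⟩
    obtain ⟨x1, hx1m, hRx1, hAx1⟩ :
        ∃ x1, x1 ∈ Fsub A ∧ R x1 = R x ∧ A x1 = A x :=
      ⟨_, SetLike.coe_mem _, R_proj hRsa hRA x, A_proj hRsa hRA x⟩
    obtain ⟨y1, hy1m, hRy1, hAy1⟩ :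
        ∃ y1, y1 ∈ Fsub A ∧ R y1 = R y ∧ A y1 = A y :=
      ⟨_, SetLike.coe_mem _, R_proj hRsa hRA y, A_proj hRsa hRA y⟩
    have hnorm : ‖R x1‖^2 + ‖R y1‖^2 = 1 := by
      have h1 : (⟪A x, x⟫_ℂ).re + (⟪A y, y⟫_ℂ).re = 1 := Real.sqrt_eq_one.mp hxy
      rw [re_inner_self hRsa hRA, re_inner_self hRsa hRA, ← hRx1, ← hRy1] at h1
      exact h1
    have hpar : ‖R (x1 + y1)‖^2 + ‖R (x1 - y1)‖^2 = 2 := by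
      rw [map_add, map_sub]
      linear_combination (parallelogram_law_with_norm ℂ (R x1) (R y1)) + 2*hnorm
    have hqswap : ‖R (y1 - x1)‖ = ‖R (x1 - y1)‖ := by
      rw [show y1 - x1 = -(x1 - y1) from (neg_sub _ _).symm, map_neg, norm_neg]
    have hpswap : ‖R (y1 + x1)‖ = ‖R (x1 + y1)‖ := by rw [add_comm]
    -- rewrite the inner expression
    have hspl : ⟪A (T1 x + T2 y), x⟫_ℂ + ⟪A (T3 x + T4 y), y⟫_ℂ
        = (⟪A (T1 x1), x1⟫_ℂ + ⟪A (T2 y1), x1⟫_ℂ)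
          + (⟪A (T4 y1), y1⟫_ℂ + ⟪A (T3 x1), y1⟫_ℂ) := by
      rw [map_add, map_add, inner_add_left, inner_add_left,
        term_proj hRsa hRA hS1 hAx1 hRx1, term_proj hRsa hRA hS2 hAy1 hRx1,
        term_proj hRsa hRA hS3 hAx1 hRy1, term_proj hRsa hRA hS4 hAy1 hRy1]
      ring
    rw [hspl]
    have hb1 : ‖⟪A (T1 x1), x1⟫_ℂ + ⟪A (T2 y1), x1⟫_ℂ‖
        ≤ (aOpNorm A (T1+T2) * ‖R (x1+y1)‖ * ‖R x1‖
            + aOpNorm A (T1-T2) * ‖R (x1-y1)‖ * ‖R x1‖) / 2 :=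
      bracket_bound hRsa hRA (adj_add hS1 hS2) (adj_sub hS1 hS2)
        (add_mem hx1m hy1m) (sub_mem hx1m hy1m) x1 x1 _ (key_id A T1 T2 x1 y1)
    have hb2 : ‖⟪A (T4 y1), y1⟫_ℂ + ⟪A (T3 x1), y1⟫_ℂ‖
        ≤ (aOpNorm A (T4+T3) * ‖R (y1+x1)‖ * ‖R y1‖
            + aOpNorm A (T4-T3) * ‖R (y1-x1)‖ * ‖R y1‖) / 2 :=
      bracket_bound hRsa hRA (adj_add hS4 hS3) (adj_sub hS4 hS3)
        (add_mem hy1m hx1m) (sub_mem hy1m hx1m) y1 y1 _ (key_id A T4 T3 y1 x1)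
    rw [hpswap, hqswap] at hb2
    have htri := norm_add_le (⟪A (T1 x1), x1⟫_ℂ + ⟪A (T2 y1), x1⟫_ℂ)
      (⟪A (T4 y1), y1⟫_ℂ + ⟪A (T3 x1), y1⟫_ℂ)
    have hnum := numeric (aOpNorm A (T1+T2)) (aOpNorm A (T1-T2))
      (aOpNorm A (T4+T3)) (aOpNorm A (T4-T3))
      (‖R (x1+y1)‖) (‖R (x1-y1)‖) (‖R x1‖) (‖R y1‖)
      (norm_nonneg _) (norm_nonneg _) hpar hnorm
    linarith
  · -- β bound
    apply Real.sSup_le _ (by positivity)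
    rintro r ⟨x, y, hxy, rfl⟩
    obtain ⟨x1, hx1m, hRx1, hAx1⟩ :
        ∃ x1, x1 ∈ Fsub A ∧ R x1 = R x ∧ A x1 = A x :=
      ⟨_, SetLike.coe_mem _, R_proj hRsa hRA x, A_proj hRsa hRA x⟩
    obtain ⟨y1, hy1m, hRy1, hAy1⟩ :
        ∃ y1, y1 ∈ Fsub A ∧ R y1 = R y ∧ A y1 = A y :=
      ⟨_, SetLike.coe_mem _, R_proj hRsa hRA y, A_proj hRsa hRA y⟩
    have hnorm : ‖R x1‖^2 + ‖R y1‖^2 = 1 := by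
      have h1 : (⟪A x, x⟫_ℂ).re + (⟪A y, y⟫_ℂ).re = 1 := Real.sqrt_eq_one.mp hxy
      rw [re_inner_self hRsa hRA, re_inner_self hRsa hRA, ← hRx1, ← hRy1] at h1
      exact h1
    have hpar : ‖R (x1 + y1)‖^2 + ‖R (x1 - y1)‖^2 = 2 := by
      rw [map_add, map_sub]
      linear_combination (parallelogram_law_with_norm ℂ (R x1) (R y1)) + 2*hnorm
    have hqswap : ‖R (y1 - x1)‖ = ‖R (x1 - y1)‖ := by
      rw [show y1 - x1 = -(x1 - y1) from (neg_sub _ _).symm, map_neg, norm_neg]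
    have hpswap : ‖R (y1 + x1)‖ = ‖R (x1 + y1)‖ := by rw [add_comm]
    have hspl : ⟪A (T1 x + T2 y), x⟫_ℂ + ⟪A (T3 x + T4 y), y⟫_ℂ
        = (⟪A (T1 x1), x1⟫_ℂ + ⟪A (T3 x1), y1⟫_ℂ)
          + (⟪A (T4 y1), y1⟫_ℂ + ⟪A (T2 y1), x1⟫_ℂ) := by
      rw [map_add, map_add, inner_add_left, inner_add_left,
        term_proj hRsa hRA hS1 hAx1 hRx1, term_proj hRsa hRA hS2 hAy1 hRx1,
        term_proj hRsa hRA hS3 hAx1 hRy1, term_proj hRsa hRA hS4 hAy1 hRy1]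
      ring
    rw [hspl]
    have hb1 : ‖⟪A (T1 x1), x1⟫_ℂ + ⟪A (T3 x1), y1⟫_ℂ‖
        ≤ (aOpNorm A (T1+T3) * ‖R x1‖ * ‖R (x1+y1)‖
            + aOpNorm A (T1-T3) * ‖R x1‖ * ‖R (x1-y1)‖) / 2 :=
      bracket_bound hRsa hRA (adj_add hS1 hS3) (adj_sub hS1 hS3)
        hx1m hx1m (x1+y1) (x1-y1) _ (key_id2 A T1 T3 x1 y1)
    have hb2 : ‖⟪A (T4 y1), y1⟫_ℂ + ⟪A (T2 y1), x1⟫_ℂ‖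
        ≤ (aOpNorm A (T4+T2) * ‖R y1‖ * ‖R (y1+x1)‖
            + aOpNorm A (T4-T2) * ‖R y1‖ * ‖R (y1-x1)‖) / 2 :=
      bracket_bound hRsa hRA (adj_add hS4 hS2) (adj_sub hS4 hS2)
        hy1m hy1m (y1+x1) (y1-x1) _ (key_id2 A T4 T2 y1 x1)
    rw [hpswap, hqswap] at hb2
    rw [show T4 + T2 = T2 + T4 from add_comm _ _,
      show aOpNorm A (T4 - T2) = aOpNorm A (T2 - T4) by
        rw [show T4 - T2 = -(T2 - T4) from (neg_sub _ _).symm, aOpNorm_neg]] at hb2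
    have htri := norm_add_le (⟪A (T1 x1), x1⟫_ℂ + ⟪A (T3 x1), y1⟫_ℂ)
      (⟪A (T4 y1), y1⟫_ℂ + ⟪A (T2 y1), x1⟫_ℂ)
    have hnum := numeric (aOpNorm A (T1+T3)) (aOpNorm A (T1-T3))
      (aOpNorm A (T2+T4)) (aOpNorm A (T2-T4))
      (‖R (x1+y1)‖) (‖R (x1-y1)‖) (‖R x1‖) (‖R y1‖)
      (norm_nonneg _) (norm_nonneg _) hpar hnorm
    linarith
end
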